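/- arXiv:1203.2557 — 6 statements merged into one kernel-verified Lean document; each statement's English description precedes it below -/
import Mathlib

section
/- Fix a constant γ with 0 < γ ≤ 1/2, and consider a sequence of majority-vote models indexed by n, where the n-th model votes n conditionally independent features of which k(n) are relevant (agree with the label with probability 1/2 + γ) and ℓ(n) are misleading (agree with probability 1/2 − γ), the rest being irrelevant (agree with probability 1/2). If k(n) − ℓ(n) = ω(√n) and k(n) = o(n) as n → ∞, then the error probability of the n-th model (the probability that at most half its features agree with the label) tends to 0, while the fraction (n − k(n) − ℓ(n))/n of irrelevant features in the model tends to 1. -/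
open MeasureTheory ProbabilityTheory Filter

section helpers

variable {Ω' : Type*} [MeasurableSpace Ω'] {μ' : Measure Ω'} [IsProbabilityMeasure μ']

lemma aux_mem_Icc {X : Ω' → ℝ} (h01 : ∀ ω, X ω = 0 ∨ X ω = 1) :
    ∀ᵐ ω ∂μ', X ω ∈ Set.Icc (0:ℝ) 1 :=
  Filter.Eventually.of_forall fun ω => by rcases h01 ω with h | h <;> simp [h]

lemma aux_memLp {X : Ω' → ℝ} (hX : Measurable X) (h01 : ∀ ω, X ω = 0 ∨ X ω = 1) :
    MemLp X 2 μ' :=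
  memLp_of_bounded (aux_mem_Icc h01) hX.aestronglyMeasurable 2

lemma aux_integral {X : Ω' → ℝ} (hX : Measurable X) (h01 : ∀ ω, X ω = 0 ∨ X ω = 1) :
    ∫ ω, X ω ∂μ' = (μ' {ω | X ω = 1}).toReal := by
  have hs : MeasurableSet {ω | X ω = 1} := hX (measurableSet_singleton 1)
  have hXeq : X = Set.indicator {ω | X ω = 1} (fun _ => (1:ℝ)) := by
    funext ω
    rcases h01 ω with h | h <;> simp [Set.indicator_apply, h]
  calc ∫ ω, X ω ∂μ' = ∫ ω, Set.indicator {ω | X ω = 1} (fun _ => (1:ℝ)) ω ∂μ' := by rw [← hXeq]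
    _ = (μ' {ω | X ω = 1}).toReal := by rw [integral_indicator_const (1:ℝ) hs]; simp; rfl

lemma aux_integral_mem {X : Ω' → ℝ} (hX : Measurable X) (h01 : ∀ ω, X ω = 0 ∨ X ω = 1) :
    (0:ℝ) ≤ μ'[X] ∧ μ'[X] ≤ 1 := by
  rw [show μ'[X] = ∫ ω, X ω ∂μ' from rfl, aux_integral hX h01]
  refine ⟨ENNReal.toReal_nonneg, ?_⟩
  calc (μ' {ω | X ω = 1}).toReal ≤ (1 : ENNReal).toReal :=
        ENNReal.toReal_mono ENNReal.one_ne_top prob_le_one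
    _ = 1 := by simp

lemma aux_var {X : Ω' → ℝ} (hX : Measurable X) (h01 : ∀ ω, X ω = 0 ∨ X ω = 1) :
    variance X μ' ≤ 1 := by
  have hmem : ∀ᵐ ω ∂μ', X ω ∈ Set.Icc (0:ℝ) 1 := aux_mem_Icc h01
  have h := variance_le_sub_mul_sub (μ := μ') hmem (hX.aemeasurable (μ := μ'))
  obtain ⟨h0, h1⟩ := aux_integral_mem (μ' := μ') hX h01
  nlinarith

end helpers

/-- **Corollary 2.** Fix `0 < γ ≤ 1/2` and consider a sequence of majority-vote models, the `n`-th
voting `n` conditionally independent features of which `k n` are relevant (agreement probability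
`1/2 + γ`), `ℓ n` are misleading (agreement probability `1/2 − γ`) and the rest irrelevant
(agreement probability `1/2`). If `k n − ℓ n = ω(√n)` and `k n = o(n)`, then the error probability
of the `n`-th model (the probability that at most half its features agree with the label) tends
to `0`, while the fraction of irrelevant features tends to `1`. -/
theorem mostly_irrelevant_but_accurate
    (γ : ℝ) (hγ0 : 0 < γ) (hγ : γ ≤ 1 / 2)
    (Ω : ℕ → Type*) (mΩ : ∀ n, MeasurableSpace (Ω n)) (μ : ∀ n, Measure (Ω n))
    (hprob : ∀ n, IsProbabilityMeasure (μ n))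
    (k ℓ : ℕ → ℕ)
    (Rel Mis : ∀ n, Finset (Fin n)) (hdisj : ∀ n, Disjoint (Rel n) (Mis n))
    (hk : ∀ n, (Rel n).card = k n) (hl : ∀ n, (Mis n).card = ℓ n)
    (V : ∀ n, Fin n → Ω n → ℝ)
    (hmeas : ∀ n i, Measurable (V n i))
    (hindep : ∀ n, iIndepFun (V n) (μ n))
    (h01 : ∀ n i ω, V n i ω = 0 ∨ V n i ω = 1)
    (hrel : ∀ n, ∀ i ∈ Rel n, μ n {ω | V n i ω = 1} = ENNReal.ofReal (1 / 2 + γ))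
    (hmis : ∀ n, ∀ i ∈ Mis n, μ n {ω | V n i ω = 1} = ENNReal.ofReal (1 / 2 - γ))
    (hirr : ∀ n, ∀ i : Fin n, i ∉ Rel n → i ∉ Mis n →
      μ n {ω | V n i ω = 1} = ENNReal.ofReal (1 / 2))
    (homega : Tendsto (fun n => ((k n : ℝ) - ℓ n) / Real.sqrt n) atTop atTop)
    (hlittleo : (fun n => (k n : ℝ)) =o[atTop] (fun n => (n : ℝ))) :
    Tendsto (fun n => (μ n {ω | (∑ i, V n i ω) ≤ n / 2}).toReal) atTop (nhds 0) ∧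
    Tendsto (fun n : ℕ => ((n : ℝ) - k n - ℓ n) / n) atTop (nhds 1) := by
  have := fun n => hprob n
  have hVℒp : ∀ n i, MemLp (V n i) 2 (μ n) := fun n i => aux_memLp (hmeas n i) (h01 n i)
  have hsum_eq : ∀ n, (fun ω => ∑ i, V n i ω) = ∑ i, V n i := by
    intro n; funext ω; simp
  have hSℒp : ∀ n, MemLp (fun ω => ∑ i, V n i ω) 2 (μ n) := by
    intro n; rw [hsum_eq n]; exact memLp_finset_sum' _ (fun i _ => hVℒp n i)
  -- eventual positivity facts
  have hev : ∀ᶠ n : ℕ in atTop, Real.sqrt n ≤ (k n : ℝ) - ℓ n ∧ (1:ℝ) ≤ Real.sqrt n := by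
    filter_upwards [homega.eventually_ge_atTop 1, eventually_ge_atTop 1] with n h1 h2
    have hn1 : (1:ℝ) ≤ (n:ℝ) := by exact_mod_cast h2
    have hs1 : (1:ℝ) ≤ Real.sqrt n := by
      rw [show (1:ℝ) = Real.sqrt 1 by simp]
      exact Real.sqrt_le_sqrt hn1
    have hs : (0:ℝ) < Real.sqrt n := lt_of_lt_of_le one_pos hs1
    refine ⟨?_, hs1⟩
    have := (le_div_iff₀ hs).mp h1
    linarith
  -- expectation of the sum
  have hE : ∀ n, (∫ ω, (∑ i, V n i ω) ∂(μ n)) = (n:ℝ)/2 + γ * ((k n : ℝ) - ℓ n) := by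
    intro n
    rw [integral_finset_sum _ (fun i _ => (hVℒp n i).integrable one_le_two)]
    have he : ∀ i : Fin n, ∫ ω, V n i ω ∂(μ n) = (μ n {ω | V n i ω = 1}).toReal :=
      fun i => aux_integral (hmeas n i) (h01 n i)
    have key : ∑ i, ∫ ω, V n i ω ∂(μ n)
        = ∑ i : Fin n, ((μ n {ω | V n i ω = 1}).toReal - 1/2) + ∑ i : Fin n, (1/2 : ℝ) := by
      rw [← Finset.sum_add_distrib]
      exact Finset.sum_congr rfl fun i _ => by rw [he i]; ring
    rw [key]
    have hzero : ∀ x ∈ Finset.univ, x ∉ Rel n ∪ Mis n →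
        ((μ n {ω | V n x ω = 1}).toReal - 1/2 : ℝ) = 0 := by
      intro x _ hx
      rw [Finset.mem_union] at hx
      push_neg at hx
      rw [hirr n x hx.1 hx.2, ENNReal.toReal_ofReal (by norm_num)]
      ring
    have hsplit : ∑ i : Fin n, ((μ n {ω | V n i ω = 1}).toReal - 1/2 : ℝ)
        = ∑ i ∈ Rel n, ((μ n {ω | V n i ω = 1}).toReal - 1/2 : ℝ)
          + ∑ i ∈ Mis n, ((μ n {ω | V n i ω = 1}).toReal - 1/2 : ℝ) := by
      rw [← Finset.sum_union (hdisj n)]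
      exact (Finset.sum_subset (Finset.subset_univ _) hzero).symm
    have hRel : ∑ i ∈ Rel n, ((μ n {ω | V n i ω = 1}).toReal - 1/2 : ℝ) = (k n : ℝ) * γ := by
      have hc : ∀ i ∈ Rel n, ((μ n {ω | V n i ω = 1}).toReal - 1/2 : ℝ) = γ := by
        intro i hi
        rw [hrel n i hi, ENNReal.toReal_ofReal (by linarith)]
        ring
      rw [Finset.sum_congr rfl hc, Finset.sum_const, hk n, nsmul_eq_mul]
    have hMis : ∑ i ∈ Mis n, ((μ n {ω | V n i ω = 1}).toReal - 1/2 : ℝ) = (ℓ n : ℝ) * (-γ) := by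
      have hc : ∀ i ∈ Mis n, ((μ n {ω | V n i ω = 1}).toReal - 1/2 : ℝ) = -γ := by
        intro i hi
        rw [hmis n i hi, ENNReal.toReal_ofReal (by linarith)]
        ring
      rw [Finset.sum_congr rfl hc, Finset.sum_const, hl n, nsmul_eq_mul]
    rw [hsplit, hRel, hMis, Finset.sum_const, Finset.card_univ, Fintype.card_fin, nsmul_eq_mul]
    ring
  -- variance of the sum
  have hvar : ∀ n, variance (fun ω => ∑ i, V n i ω) (μ n) ≤ (n:ℝ) := by
    intro n
    rw [hsum_eq n, IndepFun.variance_sum (fun i _ => hVℒp n i)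
      (fun i _ j _ hij => (hindep n).indepFun hij)]
    calc ∑ i, variance (V n i) (μ n) ≤ ∑ _i : Fin n, (1:ℝ) :=
          Finset.sum_le_sum fun i _ => aux_var (hmeas n i) (h01 n i)
      _ = (n:ℝ) := by simp
  constructor
  · -- error probability → 0
    have hB : Tendsto (fun n : ℕ => (1/γ^2) * ((((k n : ℝ) - ℓ n) / Real.sqrt n)⁻¹)^2)
        atTop (nhds 0) := by
      have h0 : Tendsto (fun n : ℕ => (((k n : ℝ) - ℓ n) / Real.sqrt n)⁻¹) atTop (nhds 0) :=
        homega.inv_tendsto_atTop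
      have := (h0.pow 2).const_mul (1/γ^2)
      simpa using this
    apply tendsto_of_tendsto_of_tendsto_of_le_of_le' tendsto_const_nhds hB
    · exact Eventually.of_forall fun n => ENNReal.toReal_nonneg
    · filter_upwards [hev] with n hn
      obtain ⟨h1, h2⟩ := hn
      have hkl : (0:ℝ) < (k n : ℝ) - ℓ n := lt_of_lt_of_le (by linarith) h1
      have hc : (0:ℝ) < γ * ((k n : ℝ) - ℓ n) := mul_pos hγ0 hkl
      have hsub : {ω | (∑ i, V n i ω) ≤ (n:ℝ) / 2}
          ⊆ {ω | γ * ((k n : ℝ) - ℓ n)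
              ≤ |(∑ i, V n i ω) - ∫ x, (∑ i, V n i x) ∂(μ n)|} := by
        intro ω hω
        simp only [Set.mem_setOf_eq] at hω ⊢
        rw [hE n]
        refine le_abs.mpr (Or.inr ?_)
        have hn0 : (0:ℝ) ≤ (n:ℝ) := Nat.cast_nonneg n
        linarith
      have hcheb := meas_ge_le_variance_div_sq (μ := μ n) (hSℒp n) hc
      have hμle := (measure_mono hsub).trans hcheb
      have hvnn : (0:ℝ) ≤ variance (fun ω => ∑ i, V n i ω) (μ n) := variance_nonneg _ _
      calc (μ n {ω | (∑ i, V n i ω) ≤ (n:ℝ) / 2}).toReal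
          ≤ (ENNReal.ofReal (variance (fun ω => ∑ i, V n i ω) (μ n)
              / (γ * ((k n : ℝ) - ℓ n))^2)).toReal :=
            ENNReal.toReal_mono ENNReal.ofReal_ne_top hμle
        _ = variance (fun ω => ∑ i, V n i ω) (μ n) / (γ * ((k n : ℝ) - ℓ n))^2 :=
            ENNReal.toReal_ofReal (div_nonneg hvnn (sq_nonneg _))
        _ ≤ (n:ℝ) / (γ * ((k n : ℝ) - ℓ n))^2 := by
            apply div_le_div_of_nonneg_right (hvar n)
            positivity
        _ = (1/γ^2) * ((((k n : ℝ) - ℓ n) / Real.sqrt n)⁻¹)^2 := by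
            rw [inv_div, div_pow, Real.sq_sqrt (Nat.cast_nonneg n), mul_pow,
              div_mul_div_comm, one_mul]
  · -- fraction of irrelevant features → 1
    have hkn : Tendsto (fun n : ℕ => (k n : ℝ)/n) atTop (nhds 0) :=
      hlittleo.tendsto_div_nhds_zero
    have hln : Tendsto (fun n : ℕ => (ℓ n : ℝ)/n) atTop (nhds 0) := by
      apply tendsto_of_tendsto_of_tendsto_of_le_of_le' tendsto_const_nhds hkn
      · exact Eventually.of_forall fun n => by positivity
      · filter_upwards [hev, eventually_ge_atTop 1] with n hn h1
        have hlk : (ℓ n : ℝ) ≤ (k n : ℝ) := by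
          have := hn.1; have := hn.2; linarith
        have hn0 : (0:ℝ) ≤ (n:ℝ) := Nat.cast_nonneg n
        gcongr
    have hT : Tendsto (fun n : ℕ => 1 - (k n : ℝ)/n - (ℓ n : ℝ)/n) atTop (nhds 1) := by
      have := (tendsto_const_nhds (x := (1:ℝ)) (f := atTop)).sub hkn |>.sub hln
      simpa using this
    apply Filter.Tendsto.congr' _ hT
    filter_upwards [eventually_ge_atTop 1] with n hn
    have hn0 : (n:ℝ) ≠ 0 := by positivity
    field_simp
end

section
/- In the learning model with parameters N, K, γ, m, let 0 ≤ β ≤ γ and 0 < δ ≤ 1. With probability at least 1 − δ over the random draw of the m training examples, the number of misleading features included in M_β (misleading features that agree with the class label on at least a 1/2 + β fraction of the m training examples) is at most 4·K·exp(−2·(γ+β)²·m) + 3·ln(1/δ). -/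
open MeasureTheory ProbabilityTheory

lemma hoeffding_bernoulli {p c : ℝ} (hp0 : 0 ≤ p) (hp1 : p ≤ 1/2) (hc : 0 ≤ c) :
    1 - p + p * Real.exp c ≤ Real.exp (p * c + c ^ 2 / 8) := by
  set D : ℝ → ℝ := fun x => 1 - p + p * Real.exp x with hD
  have hDpos : ∀ x, 0 < D x := fun x => by
    have := Real.exp_pos x
    simp only [hD]
    nlinarith
  set f : ℝ → ℝ := fun x => p * x + x ^ 2 / 8 - Real.log (D x) with hf
  set g : ℝ → ℝ := fun x => p + x / 4 - p * Real.exp x / D x with hg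
  have hDd : ∀ x, HasDerivAt D (p * Real.exp x) x := fun x => by
    exact ((Real.hasDerivAt_exp x).const_mul p).const_add (1 - p)
  have hfd : ∀ x, HasDerivAt f (g x) x := by
    intro x
    have h1 : HasDerivAt (fun x : ℝ => p * x + x ^ 2 / 8) (p + x / 4) x := by
      have : HasDerivAt (fun y : ℝ => p * y + y ^ 2 / 8) (p * 1 + ((2:ℕ):ℝ) * x ^ 1 / 8) x :=
        ((hasDerivAt_id x).const_mul p).add ((hasDerivAt_pow 2 x).div_const 8)
      convert this using 1
      ring
    have h2 : HasDerivAt (fun x => Real.log (D x)) (p * Real.exp x / D x) x :=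
      (hDd x).log (hDpos x).ne'
    exact h1.sub h2
  have hgd : ∀ x, HasDerivAt g
      (1/4 - (p * Real.exp x * D x - p * Real.exp x * (p * Real.exp x)) / (D x) ^ 2) x := by
    intro x
    have h1 : HasDerivAt (fun x : ℝ => p + x / 4) (1/4) x := by
      simpa using ((hasDerivAt_id x).div_const 4).const_add p
    have h2 : HasDerivAt (fun x => p * Real.exp x / D x)
        ((p * Real.exp x * D x - p * Real.exp x * (p * Real.exp x)) / (D x) ^ 2) x :=
      ((Real.hasDerivAt_exp x).const_mul p).div (hDd x) (hDpos x).ne'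
    exact h1.sub h2
  have hg_nonneg : ∀ x, 0 ≤ x → 0 ≤ g x := by
    intro x hx
    have hmono : Monotone g := by
      apply monotone_of_deriv_nonneg
      · exact fun x => (hgd x).differentiableAt
      · intro x
        rw [(hgd x).deriv]
        have hE := Real.exp_pos x
        have hDx := hDpos x
        simp only [hD] at hDx ⊢
        rw [sub_nonneg, div_le_iff₀ (by positivity)]
        nlinarith [sq_nonneg ((1 - p) - p * Real.exp x)]
    have : g 0 = 0 := by simp [hg, hD]
    linarith [hmono hx, this]
  have hfmono : MonotoneOn f (Set.Ici 0) := by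
    apply monotoneOn_of_deriv_nonneg (convex_Ici 0)
    · exact (Differentiable.continuous (fun x => (hfd x).differentiableAt)).continuousOn
    · exact fun x _ => ((hfd x).differentiableAt).differentiableWithinAt
    · intro x hx
      rw [(hfd x).deriv]
      exact hg_nonneg x (le_of_lt (by simpa using hx))
  have h0 : f 0 = 0 := by simp [hf, hD]
  have hfc : 0 ≤ f c := by
    have := hfmono (Set.self_mem_Ici) (Set.mem_Ici.mpr hc) hc
    linarith
  have : Real.log (D c) ≤ p * c + c ^ 2 / 8 := by
    simp only [hf] at hfc; linarith
  calc D c = Real.exp (Real.log (D c)) := (Real.exp_log (hDpos c)).symm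
    _ ≤ _ := Real.exp_le_exp.mpr this

lemma aux_prod {Ω : Type*} [MeasurableSpace Ω] {μ : Measure Ω} [IsProbabilityMeasure μ]
    {η : Type*} [MeasurableSpace η] {κ : Type*} [DecidableEq κ]
    (W : η → Ω → ℝ) (hmeas : ∀ p, Measurable (W p))
    (hindep : iIndepFun W μ)
    (s : Finset κ) (G : κ → Finset η)
    (hG : ∀ j1 ∈ s, ∀ j2 ∈ s, j1 ≠ j2 → Disjoint (G j1) (G j2))
    (F : κ → Ω → ℝ) (C : κ → ℝ)
    (hφ : ∀ j, ∃ φ : ({x // x ∈ G j} → ℝ) → ℝ,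
      Measurable φ ∧ ∀ ω, F j ω = φ (fun i => W i.1 ω))
    (hFb : ∀ j ω, |F j ω| ≤ C j) :
    Integrable (fun ω => ∏ j ∈ s, F j ω) μ ∧
      ∫ ω, ∏ j ∈ s, F j ω ∂μ = ∏ j ∈ s, ∫ ω, F j ω ∂μ := by
  classical
  choose φ hφm hφv using hφ
  have hFmeas : ∀ j, Measurable (F j) := by
    intro j
    have : F j = fun ω => φ j (fun i => W i.1 ω) := funext (hφv j)
    rw [this]
    exact (hφm j).comp (measurable_pi_lambda _ (fun i => hmeas i.1))
  have hFint : ∀ j, Integrable (F j) μ := by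
    intro j
    refine ⟨(hFmeas j).aestronglyMeasurable, ?_⟩
    exact (hasFiniteIntegral_const (C j)).mono' (Filter.Eventually.of_forall (fun ω => by
      simpa using hFb j ω))
  induction s using Finset.induction_on with
  | empty => simp
  | @insert j s hj ih =>
    have hG' : ∀ j1 ∈ s, ∀ j2 ∈ s, j1 ≠ j2 → Disjoint (G j1) (G j2) :=
      fun j1 h1 j2 h2 => hG j1 (Finset.mem_insert_of_mem h1) j2 (Finset.mem_insert_of_mem h2)
    obtain ⟨ihInt, ihEq⟩ := ih hG'
    -- independence of F j and the product over s
    have hdisj : Disjoint (G j) (s.biUnion G) := by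
      rw [Finset.disjoint_biUnion_right]
      intro j' hj'
      exact hG j (Finset.mem_insert_self _ _) j' (Finset.mem_insert_of_mem hj')
        (fun h => hj (h ▸ hj'))
    have base := hindep.indepFun_finset (G j) (s.biUnion G) hdisj hmeas
    set B := s.biUnion G with hB
    have hInd : IndepFun (F j) (fun ω => ∏ j' ∈ s, F j' ω) μ := by
      have hΨm : Measurable (fun v : ({x // x ∈ B} → ℝ) =>
          ∏ j' ∈ s.attach, φ j'.1 (fun i =>
            v ⟨i.1, Finset.mem_biUnion.mpr ⟨j'.1, j'.2, i.2⟩⟩)) := by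
        apply Finset.measurable_prod
        intro j' _
        exact (hφm j'.1).comp (measurable_pi_lambda _ (fun i => measurable_pi_apply _))
      have := base.comp (hφm j) hΨm
      convert this using 1
      · funext ω
        exact hφv j ω
      · funext ω
        simp only [Function.comp]
        rw [← Finset.prod_attach s (fun j' => F j' ω)]
        exact Finset.prod_congr rfl (fun j' _ => hφv j'.1 ω)
    have hmul : (fun ω => ∏ j' ∈ insert j s, F j' ω)
        = (F j) * (fun ω => ∏ j' ∈ s, F j' ω) := by
      funext ω
      simp [Finset.prod_insert hj]
    constructor
    · rw [hmul]
      exact hInd.integrable_mul (hFint j) ihInt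
    · rw [hmul, hInd.integral_mul_eq_mul_integral (hFint j).aestronglyMeasurable ihInt.aestronglyMeasurable,
        ihEq, Finset.prod_insert hj]

lemma tail_bound
    {Ω : Type*} [MeasurableSpace Ω] (μ : Measure Ω) [IsProbabilityMeasure μ]
    (K m : ℕ) (γ β : ℝ)
    (hβ0 : 0 ≤ β) (hβγ : β ≤ γ) (hγ : γ ≤ 1 / 2)
    (W : Fin K × Fin m → Ω → ℝ)
    (hmeas : ∀ p, Measurable (W p))
    (hindep : iIndepFun W μ)
    (h01 : ∀ p ω, W p ω = 0 ∨ W p ω = 1)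
    (hp : ∀ p, μ {ω | W p ω = 1} = ENNReal.ofReal (1 / 2 - γ))
    (j : Fin K) :
    (μ {ω | (1 / 2 + β) * m ≤ ∑ t : Fin m, W (j, t) ω}).toReal
      ≤ Real.exp (-2 * (γ + β) ^ 2 * m) := by
  classical
  set θ : ℝ := (1 / 2 + β) * m with hθ
  set ε : ℝ := γ + β with hε
  have hγ0 : 0 ≤ γ := le_trans hβ0 hβγ
  have hε0 : 0 ≤ ε := by positivity
  set c : ℝ := 4 * ε with hc
  have hc0 : 0 ≤ c := by positivity
  set b : ℝ := Real.exp c - 1 with hb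
  have hb0 : 0 ≤ b := by
    have := Real.one_le_exp hc0
    simp only [hb]; linarith
  set p : ℝ := 1 / 2 - γ with hpdef
  have hp0 : 0 ≤ p := by simp only [hpdef]; linarith
  have hp1 : p ≤ 1 / 2 := by simp only [hpdef]; linarith
  -- integral of each W
  have hWint : ∀ pt : Fin K × Fin m, Integrable (W pt) μ := by
    intro pt
    refine ⟨(hmeas pt).aestronglyMeasurable, ?_⟩
    refine (hasFiniteIntegral_const (1:ℝ)).mono'
      (Filter.Eventually.of_forall (fun ω => ?_))
    rcases h01 pt ω with h | h <;> rw [h] <;> norm_num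
  have hWval : ∀ pt : Fin K × Fin m, ∫ ω, W pt ω ∂μ = p := by
    intro pt
    have hset : MeasurableSet {ω | W pt ω = 1} := hmeas pt (measurableSet_singleton 1)
    have hind : W pt = Set.indicator {ω | W pt ω = 1} (fun _ => (1:ℝ)) := by
      funext ω
      by_cases hm : ω ∈ {ω | W pt ω = 1}
      · rw [Set.indicator_of_mem hm]; exact hm
      · rw [Set.indicator_of_notMem hm]
        rcases h01 pt ω with h | h
        · exact h
        · exact absurd h hm
    rw [hind, integral_indicator_const _ hset, measureReal_def, hp pt, smul_eq_mul, mul_one,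
      ENNReal.toReal_ofReal (by linarith : (0:ℝ) ≤ 1 / 2 - γ)]
  -- apply aux_prod
  obtain ⟨hZint, hZeq⟩ := aux_prod W hmeas hindep (Finset.univ : Finset (Fin m))
    (fun t => {(j, t)})
    (by
      intro t1 _ t2 _ hne
      simp only [Finset.disjoint_singleton, ne_eq, Prod.mk.injEq, true_and]
      exact hne)
    (fun t ω => 1 + b * W (j, t) ω) (fun _ => 1 + b)
    (by
      intro t
      refine ⟨fun v => 1 + b * v ⟨(j, t), Finset.mem_singleton_self _⟩, ?_, fun ω => rfl⟩
      exact by fun_prop)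
    (by
      intro t ω
      show |1 + b * W (j, t) ω| ≤ 1 + b
      rcases h01 (j, t) ω with h | h <;> rw [h, abs_le] <;> constructor <;> nlinarith)
  -- pointwise identity
  have hptwise : ∀ ω, (∏ t : Fin m, (1 + b * W (j, t) ω))
      = Real.exp (c * ∑ t : Fin m, W (j, t) ω) := by
    intro ω
    rw [Finset.mul_sum, Real.exp_sum]
    refine Finset.prod_congr rfl (fun t _ => ?_)
    rcases h01 (j, t) ω with h | h <;> rw [h] <;> simp [hb]
  -- Markov
  have hnonneg : 0 ≤ᵐ[μ] (fun ω => ∏ t : Fin m, (1 + b * W (j, t) ω)) := by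
    refine Filter.Eventually.of_forall (fun ω => ?_)
    show (0:ℝ) ≤ ∏ t : Fin m, (1 + b * W (j, t) ω)
    rw [hptwise ω]; positivity
  have hmarkov := mul_meas_ge_le_integral_of_nonneg hnonneg hZint (Real.exp (c * θ))
  have hsub : {ω | θ ≤ ∑ t : Fin m, W (j, t) ω}
      ⊆ {ω | Real.exp (c * θ) ≤ ∏ t : Fin m, (1 + b * W (j, t) ω)} := by
    intro ω hω
    simp only [Set.mem_setOf_eq] at hω ⊢
    rw [hptwise ω]
    exact Real.exp_le_exp.mpr (mul_le_mul_of_nonneg_left hω hc0)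
  have hAle : (μ {ω | θ ≤ ∑ t : Fin m, W (j, t) ω}).toReal
      ≤ (μ {ω | Real.exp (c * θ) ≤ ∏ t : Fin m, (1 + b * W (j, t) ω)}).toReal := by
    apply ENNReal.toReal_mono (measure_ne_top μ _) (measure_mono hsub)
  -- value of the integral
  have hval : ∫ ω, ∏ t : Fin m, (1 + b * W (j, t) ω) ∂μ = (1 + b * p) ^ m := by
    rw [hZeq]
    have : ∀ t : Fin m, ∫ ω, (1 + b * W (j, t) ω) ∂μ = 1 + b * p := by
      intro t
      rw [integral_add (integrable_const 1) ((hWint (j, t)).const_mul b),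
        integral_const, integral_const_mul, hWval (j, t)]
      simp
    rw [Finset.prod_congr rfl (fun t _ => this t), Finset.prod_const, Finset.card_univ,
      Fintype.card_fin]
  -- Hoeffding bound
  have hhoef : (1 + b * p) ^ m ≤ Real.exp (m * (p * c + c ^ 2 / 8)) := by
    have h1 : 1 + b * p = 1 - p + p * Real.exp c := by simp only [hb]; ring
    have h2 : (1:ℝ) - p + p * Real.exp c ≤ Real.exp (p * c + c ^ 2 / 8) :=
      hoeffding_bernoulli hp0 hp1 hc0
    calc (1 + b * p) ^ m ≤ Real.exp (p * c + c ^ 2 / 8) ^ m := by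
          apply pow_le_pow_left₀ (by rw [h1]; nlinarith [Real.exp_pos c]) (h1 ▸ h2)
      _ = Real.exp (m * (p * c + c ^ 2 / 8)) := by
          rw [← Real.exp_nat_mul]
  have hexp_pos : (0:ℝ) < Real.exp (c * θ) := Real.exp_pos _
  have final : (μ {ω | θ ≤ ∑ t : Fin m, W (j, t) ω}).toReal
      ≤ Real.exp (m * (p * c + c ^ 2 / 8)) / Real.exp (c * θ) := by
    rw [le_div_iff₀ hexp_pos, mul_comm]
    calc Real.exp (c * θ) * (μ {ω | θ ≤ ∑ t : Fin m, W (j, t) ω}).toReal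
        ≤ Real.exp (c * θ) * (μ {ω | Real.exp (c * θ)
            ≤ ∏ t : Fin m, (1 + b * W (j, t) ω)}).toReal := by
          exact mul_le_mul_of_nonneg_left hAle hexp_pos.le
      _ ≤ ∫ ω, ∏ t : Fin m, (1 + b * W (j, t) ω) ∂μ := hmarkov
      _ = (1 + b * p) ^ m := hval
      _ ≤ _ := hhoef
  calc (μ {ω | θ ≤ ∑ t : Fin m, W (j, t) ω}).toReal
      ≤ Real.exp (m * (p * c + c ^ 2 / 8)) / Real.exp (c * θ) := final
    _ = Real.exp (-2 * ε ^ 2 * m) := by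
        rw [← Real.exp_sub]
        congr 1
        simp only [hpdef, hc, hθ, hε]
        ring

/-- **Lemma 3 (few misleading features).** In the learning model with parameters `N, K, γ, m`,
let `W (j, t)` be the indicator that the `j`-th misleading feature agrees with the class label on
the `t`-th training example; these `K·m` indicators are jointly independent, each equal to `1`
with probability `1/2 − γ`. For `0 ≤ β ≤ γ` and `0 < δ ≤ 1`, with probability at least `1 − δ`
the number of misleading features included in `M_β` (those agreeing with the label on at least a
`1/2 + β` fraction of the `m` training examples) is at most
`4·K·exp(−2·(γ+β)²·m) + 3·ln(1/δ)`. -/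
theorem few_misleading_features
    {Ω : Type*} [MeasurableSpace Ω] (μ : Measure Ω) [IsProbabilityMeasure μ]
    (N K m : ℕ) (hKN : K ≤ N) (γ β δ : ℝ)
    (hβ0 : 0 ≤ β) (hβγ : β ≤ γ) (hγ : γ ≤ 1 / 2) (hδ0 : 0 < δ) (hδ1 : δ ≤ 1)
    (W : Fin K × Fin m → Ω → ℝ)
    (hmeas : ∀ p, Measurable (W p))
    (hindep : iIndepFun W μ)
    (h01 : ∀ p ω, W p ω = 0 ∨ W p ω = 1)
    (hp : ∀ p, μ {ω | W p ω = 1} = ENNReal.ofReal (1 / 2 - γ)) :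
    ENNReal.ofReal (1 - δ) ≤
      μ {ω | ((Finset.univ.filter (fun j : Fin K =>
            (1 / 2 + β) * m ≤ ∑ t : Fin m, W (j, t) ω)).card : ℝ)
          ≤ 4 * K * Real.exp (-2 * (γ + β) ^ 2 * m) + 3 * Real.log (1 / δ)} := by
  set θ : ℝ := (1 / 2 + β) * m with hθdef
  set q : ℝ := Real.exp (-2 * (γ + β) ^ 2 * m) with hqdef
  set L : ℝ := Real.log (1 / δ) with hLdef
  set a : ℝ := 4 * K * q + 3 * L with hadef
  set X : Ω → ℝ := fun ω => ((Finset.univ.filter (fun j : Fin K =>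
      θ ≤ ∑ t : Fin m, W (j, t) ω)).card : ℝ) with hXdef
  have hγ0 : 0 ≤ γ := le_trans hβ0 hβγ
  have hq0 : 0 < q := Real.exp_pos _
  have hL0 : 0 ≤ L := Real.log_nonneg (by rw [le_div_iff₀ hδ0]; linarith)
  have hSmeas : ∀ j : Fin K, Measurable (fun ω => ∑ t : Fin m, W (j, t) ω) :=
    fun j => Finset.measurable_sum _ (fun t _ => hmeas (j, t))
  have hAmeas : ∀ j : Fin K, MeasurableSet {ω | θ ≤ ∑ t : Fin m, W (j, t) ω} :=
    fun j => measurableSet_le measurable_const (hSmeas j)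
  have htail : ∀ j : Fin K, (μ {ω | θ ≤ ∑ t : Fin m, W (j, t) ω}).toReal ≤ q :=
    fun j => tail_bound μ K m γ β hβ0 hβγ hγ W hmeas hindep h01 hp j
  -- the product random variable
  obtain ⟨hZint, hZeq⟩ := aux_prod W hmeas hindep (Finset.univ : Finset (Fin K))
    (fun j => {j} ×ˢ Finset.univ)
    (by
      intro j1 _ j2 _ hne
      rw [Finset.disjoint_left]
      intro x hx1 hx2
      simp only [Finset.mem_product, Finset.mem_singleton] at hx1 hx2
      exact hne (by rw [← hx1.1, hx2.1]))
    (fun j ω => if θ ≤ ∑ t : Fin m, W (j, t) ω then (2:ℝ) else 1) (fun _ => 2)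
    (by
      intro j
      refine ⟨fun v => if θ ≤ ∑ t : Fin m, v ⟨(j, t), by simp⟩ then (2:ℝ) else 1,
        ?_, fun ω => rfl⟩
      refine Measurable.ite ?_ measurable_const measurable_const
      exact measurableSet_le measurable_const
        (Finset.measurable_sum _ (fun t _ => by apply measurable_pi_apply)))
    (by
      intro j ω
      show |if θ ≤ ∑ t : Fin m, W (j, t) ω then (2:ℝ) else 1| ≤ 2
      split_ifs <;> rw [abs_le] <;> constructor <;> norm_num)
  -- integral of each factor
  have hgint : ∀ j : Fin K, ∫ ω, (if θ ≤ ∑ t : Fin m, W (j, t) ω then (2:ℝ) else 1) ∂μ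
      = 1 + (μ {ω | θ ≤ ∑ t : Fin m, W (j, t) ω}).toReal := by
    intro j
    have heq : (fun ω => if θ ≤ ∑ t : Fin m, W (j, t) ω then (2:ℝ) else 1)
        = fun ω => 1 + Set.indicator {ω | θ ≤ ∑ t : Fin m, W (j, t) ω} (fun _ => (1:ℝ)) ω := by
      funext ω
      by_cases hω : θ ≤ ∑ t : Fin m, W (j, t) ω
      · have hm : ω ∈ {ω | θ ≤ ∑ t : Fin m, W (j, t) ω} := hω
        rw [if_pos hω, Set.indicator_of_mem hm]; norm_num
      · have hm : ω ∉ {ω | θ ≤ ∑ t : Fin m, W (j, t) ω} := hω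
        rw [if_neg hω, Set.indicator_of_notMem hm]; norm_num
    rw [heq, integral_add (integrable_const 1)
      ((integrable_const (1:ℝ)).indicator (hAmeas j)),
      integral_const, integral_indicator_const _ (hAmeas j)]
    simp; rfl
  -- bound on the integral of the product
  have hint_le : ∫ ω, ∏ j : Fin K, (if θ ≤ ∑ t : Fin m, W (j, t) ω then (2:ℝ) else 1) ∂μ
      ≤ Real.exp (K * q) := by
    rw [hZeq]
    calc ∏ j : Fin K, ∫ ω, (if θ ≤ ∑ t : Fin m, W (j, t) ω then (2:ℝ) else 1) ∂μ
        = ∏ j : Fin K, (1 + (μ {ω | θ ≤ ∑ t : Fin m, W (j, t) ω}).toReal) :=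
          Finset.prod_congr rfl (fun j _ => hgint j)
      _ ≤ ∏ _j : Fin K, Real.exp q := by
          refine Finset.prod_le_prod (fun j _ => by positivity) (fun j _ => ?_)
          have h1 := htail j
          have h2 := Real.add_one_le_exp q
          linarith
      _ = Real.exp (K * q) := by
          rw [Finset.prod_const, ← Real.exp_nat_mul, Finset.card_univ, Fintype.card_fin]
  -- pointwise identity with the card
  have hcard : ∀ ω, (∏ j : Fin K, if θ ≤ ∑ t : Fin m, W (j, t) ω then (2:ℝ) else 1)
      = Real.exp (X ω * Real.log 2) := by
    intro ω
    rw [Finset.prod_ite, Finset.prod_const, Finset.prod_const_one, mul_one,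
      hXdef, Real.exp_nat_mul, Real.exp_log two_pos]
  -- Markov's inequality
  have hnonneg : 0 ≤ᵐ[μ] (fun ω => ∏ j : Fin K, if θ ≤ ∑ t : Fin m, W (j, t) ω then (2:ℝ) else 1) := by
    refine Filter.Eventually.of_forall (fun ω => ?_)
    show (0:ℝ) ≤ ∏ j : Fin K, if θ ≤ ∑ t : Fin m, W (j, t) ω then (2:ℝ) else 1
    rw [hcard ω]; positivity
  have hmark := mul_meas_ge_le_integral_of_nonneg hnonneg hZint (Real.exp (a * Real.log 2))
  have hsub : {ω | a < X ω} ⊆ {ω | Real.exp (a * Real.log 2)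
      ≤ ∏ j : Fin K, if θ ≤ ∑ t : Fin m, W (j, t) ω then (2:ℝ) else 1} := by
    intro ω hω
    rw [Set.mem_setOf_eq, hcard ω]
    exact Real.exp_le_exp.mpr (mul_le_mul_of_nonneg_right (le_of_lt hω)
      (Real.log_nonneg one_le_two))
  -- measurability of X
  have hXmeas : Measurable X := by
    have hXsum : X = fun ω => ∑ j : Fin K, if θ ≤ ∑ t : Fin m, W (j, t) ω then (1:ℝ) else 0 := by
      funext ω
      simp only [hXdef]
      rw [Finset.card_filter, Nat.cast_sum]
      exact Finset.sum_congr rfl (fun j _ => by split_ifs <;> simp)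
    rw [hXsum]
    exact Finset.measurable_sum _ (fun j _ =>
      Measurable.ite (measurableSet_le measurable_const (hSmeas j))
        measurable_const measurable_const)
  have hbadmeas : MeasurableSet {ω | a < X ω} :=
    measurableSet_lt measurable_const hXmeas
  -- bound on the bad event
  have hbad : (μ {ω | a < X ω}).toReal ≤ δ := by
    have h1 : (μ {ω | a < X ω}).toReal ≤ (μ {ω | Real.exp (a * Real.log 2)
        ≤ ∏ j : Fin K, if θ ≤ ∑ t : Fin m, W (j, t) ω then (2:ℝ) else 1}).toReal :=
      ENNReal.toReal_mono (measure_ne_top μ _) (measure_mono hsub)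
    have h3 : (μ {ω | Real.exp (a * Real.log 2)
        ≤ ∏ j : Fin K, if θ ≤ ∑ t : Fin m, W (j, t) ω then (2:ℝ) else 1}).toReal
        ≤ Real.exp (K * q - a * Real.log 2) := by
      rw [Real.exp_sub, le_div_iff₀ (Real.exp_pos _)]
      calc _ ≤ ∫ ω, ∏ j : Fin K, (if θ ≤ ∑ t : Fin m, W (j, t) ω then (2:ℝ) else 1) ∂μ := by
            rw [mul_comm]; exact hmark
        _ ≤ Real.exp (K * q) := hint_le
    have h4 : Real.exp (K * q - a * Real.log 2) ≤ δ := by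
      have hlog2 : (0.6931471803 : ℝ) < Real.log 2 := Real.log_two_gt_d9
      have hKq : (0:ℝ) ≤ K * q := by positivity
      have h5 : K * q - a * Real.log 2 ≤ -L := by
        rw [hadef]
        nlinarith [mul_le_mul_of_nonneg_left hlog2.le hKq,
          mul_le_mul_of_nonneg_left hlog2.le hL0]
      calc Real.exp (K * q - a * Real.log 2) ≤ Real.exp (-L) := Real.exp_le_exp.mpr h5
        _ = δ := by
            rw [hLdef, one_div, Real.log_inv, neg_neg, Real.exp_log hδ0]
    exact le_trans (le_trans h1 h3) h4
  -- conclude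
  have hgoal_set : {ω | X ω ≤ a} = {ω | a < X ω}ᶜ := by
    ext ω; simp [not_lt]
  show ENNReal.ofReal (1 - δ) ≤ μ {ω | X ω ≤ a}
  rw [hgoal_set, prob_compl_eq_one_sub hbadmeas]
  have hμbad : μ {ω | a < X ω} ≤ ENNReal.ofReal δ := by
    rw [← ENNReal.ofReal_toReal (measure_ne_top μ _)]
    exact ENNReal.ofReal_le_ofReal hbad
  calc ENNReal.ofReal (1 - δ) = 1 - ENNReal.ofReal δ := by
        rw [ENNReal.ofReal_sub _ hδ0.le, ENNReal.ofReal_one]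
    _ ≤ 1 - μ {ω | a < X ω} := tsub_le_tsub_left hμbad 1
end

section
/- In the learning model with parameters N, K, γ, m, let β ≥ 0 and 0 < δ ≤ 1. With probability at least 1 − 2δ over the random draw of the m training examples, the number of irrelevant features included in M_β (irrelevant features that agree with the class label on at least a 1/2 + β fraction of the m training examples) is at most 8·N·exp(−2·β²·m) + 6·ln(1/δ). -/
open MeasureTheory ProbabilityTheory


section FewIrrelevantHelpers
open Real

variable {Ω : Type*} [MeasurableSpace Ω] {μ : Measure Ω}

lemma aux_indep_precomp {ι ι' β : Type*} [MeasurableSpace β]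
    {f : ι → Ω → β} (h : iIndepFun f μ)
    (e : ι' → ι) (he : Function.Injective e) :
    iIndepFun (fun i => f (e i)) μ := by
  classical
  rw [iIndepFun_iff_measure_inter_preimage_eq_mul] at h ⊢
  intro S sets hsets
  have key := h (S.image e) (sets := Function.extend e sets fun _ => Set.univ) ?_
  · have h1 : (⋂ i ∈ S.image e, f i ⁻¹' Function.extend e sets (fun _ => Set.univ) i)
        = ⋂ i ∈ S, f (e i) ⁻¹' sets i := by
      rw [Finset.set_biInter_finset_image]
      exact Set.iInter₂_congr fun i hi => by rw [he.extend_apply]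
    have h2 : (∏ i ∈ S.image e, μ (f i ⁻¹' Function.extend e sets (fun _ => Set.univ) i))
        = ∏ i ∈ S, μ (f (e i) ⁻¹' sets i) := by
      rw [Finset.prod_image (fun a _ b _ hab => he hab)]
      exact Finset.prod_congr rfl fun i hi => by rw [he.extend_apply]
    rw [h1, h2] at key
    exact key
  · intro i hi
    rcases Finset.mem_image.mp hi with ⟨i', hi', rfl⟩
    rw [he.extend_apply]
    exact hsets i' hi'

lemma aux_eq_indicator {X : Ω → ℝ} (h01 : ∀ ω, X ω = 0 ∨ X ω = 1) :
    X = Set.indicator {ω | X ω = 1} (fun _ => (1:ℝ)) := by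
  funext ω
  rcases h01 ω with h | h <;> simp [Set.indicator, h]

lemma aux_integrable_01 [IsFiniteMeasure μ] {X : Ω → ℝ} (hX : Measurable X)
    (h01 : ∀ ω, X ω = 0 ∨ X ω = 1) : Integrable X μ := by
  rw [aux_eq_indicator h01]
  exact (integrable_const (1:ℝ)).indicator (hX (measurableSet_singleton 1))

lemma aux_integral_01 [IsProbabilityMeasure μ] {X : Ω → ℝ} (hX : Measurable X)
    (h01 : ∀ ω, X ω = 0 ∨ X ω = 1) : ∫ ω, X ω ∂μ = (μ {ω | X ω = 1}).toReal := by
  have hs : MeasurableSet {ω | X ω = 1} := hX (measurableSet_singleton 1)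
  conv_lhs => rw [aux_eq_indicator h01]
  rw [integral_indicator_const (1:ℝ) hs]
  simp
  rfl

lemma aux_exp_eq {X : Ω → ℝ} (h01 : ∀ ω, X ω = 0 ∨ X ω = 1) (t : ℝ) :
    (fun ω => exp (t * X ω)) = fun ω => 1 + (exp t - 1) * X ω := by
  funext ω
  rcases h01 ω with h | h <;> simp [h]

lemma aux_integrable_exp_01 [IsProbabilityMeasure μ] {X : Ω → ℝ} (hX : Measurable X)
    (h01 : ∀ ω, X ω = 0 ∨ X ω = 1) (t : ℝ) :
    Integrable (fun ω => exp (t * X ω)) μ := by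
  rw [aux_exp_eq h01]
  exact (integrable_const 1).add ((aux_integrable_01 hX h01).const_mul _)

lemma aux_mgf_01 [IsProbabilityMeasure μ] {X : Ω → ℝ} (hX : Measurable X)
    (h01 : ∀ ω, X ω = 0 ∨ X ω = 1) (t : ℝ) :
    mgf X μ t = 1 + (exp t - 1) * (μ {ω | X ω = 1}).toReal := by
  rw [mgf, aux_exp_eq h01, integral_add (integrable_const 1)
    ((aux_integrable_01 hX h01).const_mul _), integral_const, integral_const_mul,
    aux_integral_01 hX h01]
  simp


lemma aux_tail [IsProbabilityMeasure μ] {m : ℕ} {β : ℝ} (hβ : 0 ≤ β)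
    (B : Fin m → Ω → ℝ) (hmeas : ∀ t, Measurable (B t))
    (hindep : iIndepFun B μ)
    (h01 : ∀ t ω, B t ω = 0 ∨ B t ω = 1)
    (hp : ∀ t, μ {ω | B t ω = 1} = ENNReal.ofReal (1 / 2)) :
    (μ {ω | (1 / 2 + β) * m ≤ ∑ t : Fin m, B t ω}).toReal ≤ exp (-2 * β ^ 2 * m) := by
  have hsum : {ω | (1 / 2 + β) * m ≤ ∑ t : Fin m, B t ω}
      = {ω | (1 / 2 + β) * m ≤ (∑ t : Fin m, B t) ω} := by
    simp [Finset.sum_apply]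
  have h_int : ∀ t : Fin m, t ∈ Finset.univ →
      Integrable (fun ω => exp (4 * β * B t ω)) μ :=
    fun t _ => aux_integrable_exp_01 (hmeas t) (h01 t) _
  have hch := measure_ge_le_exp_mul_mgf (μ := μ) (X := ∑ t : Fin m, B t)
    ((1 / 2 + β) * m) (t := 4 * β) (by positivity)
    (hindep.integrable_exp_mul_sum hmeas h_int)
  rw [hsum]
  refine hch.trans ?_
  have hmgf : mgf (∑ t : Fin m, B t) μ (4 * β) = ((1 + exp (4 * β)) / 2) ^ m := by
    rw [hindep.mgf_sum hmeas]
    have : ∀ t : Fin m, mgf (B t) μ (4 * β) = (1 + exp (4 * β)) / 2 := by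
      intro t
      rw [aux_mgf_01 (hmeas t) (h01 t), hp t, ENNReal.toReal_ofReal (by norm_num)]
      ring
    simp [this, div_pow]
  rw [hmgf]
  have hbase : (1 + exp (4 * β)) / 2 ≤ exp (2 * β + 2 * β ^ 2) := by
    have hcosh : cosh (2 * β) ≤ exp (2 * β ^ 2) := by
      have := cosh_le_exp_half_sq (2 * β)
      calc cosh (2 * β) ≤ exp ((2 * β) ^ 2 / 2) := this
        _ = exp (2 * β ^ 2) := by ring_nf
    have hid : (1 + exp (4 * β)) / 2 = exp (2 * β) * cosh (2 * β) := by
      rw [Real.cosh_eq]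
      have h1 : exp (2*β) * ((exp (2*β) + exp (-(2*β)))/2)
          = (exp (2*β) * exp (2*β) + exp (2*β) * exp (-(2*β)))/2 := by ring
      rw [h1, ← exp_add, ← exp_add, show (2*β+2*β)=4*β by ring]
      simp
      ring
    rw [hid]
    calc exp (2 * β) * cosh (2 * β) ≤ exp (2 * β) * exp (2 * β ^ 2) :=
          mul_le_mul_of_nonneg_left hcosh (exp_nonneg _)
      _ = exp (2 * β + 2 * β ^ 2) := by rw [← exp_add]
  have hpow : ((1 + exp (4 * β)) / 2) ^ m ≤ exp ((2 * β + 2 * β ^ 2) * m) := by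
    calc ((1 + exp (4 * β)) / 2) ^ m ≤ exp (2 * β + 2 * β ^ 2) ^ m :=
          pow_le_pow_left₀ (by positivity) hbase m
      _ = exp ((2 * β + 2 * β ^ 2) * m) := by
          rw [← exp_nat_mul]; ring_nf
  calc exp (-(4 * β) * ((1 / 2 + β) * m)) * ((1 + exp (4 * β)) / 2) ^ m
      ≤ exp (-(4 * β) * ((1 / 2 + β) * m)) * exp ((2 * β + 2 * β ^ 2) * m) :=
        mul_le_mul_of_nonneg_left hpow (exp_nonneg _)
    _ = exp (-2 * β ^ 2 * m) := by rw [← exp_add]; ring_nf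


end FewIrrelevantHelpers

open Real in
/-- **Lemma 4 (few irrelevant features).** In the learning model with parameters `N, K, γ, m`,
let `A (j, t)` be the indicator that the `j`-th irrelevant *variable* agrees with the class label
on the `t`-th training example; these `(N−K)·m` indicators are jointly independent and each
equals `1` with probability `1/2`.  The positive irrelevant feature `j` is included in `M_β` when
`∑ t, A (j,t) ≥ (1/2 + β)·m`, and the negated irrelevant feature `j` is included when
`∑ t, (1 − A (j,t)) ≥ (1/2 + β)·m`. For `β ≥ 0` and `0 < δ ≤ 1`, with probability at least
`1 − 2δ` the total number of irrelevant features included in `M_β` is at most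
`8·N·exp(−2·β²·m) + 6·ln(1/δ)`. -/
theorem few_irrelevant_features
    {Ω : Type*} [MeasurableSpace Ω] (μ : Measure Ω) [IsProbabilityMeasure μ]
    (N K m : ℕ) (hKN : K ≤ N) (β δ : ℝ)
    (hβ0 : 0 ≤ β) (hδ0 : 0 < δ) (hδ1 : δ ≤ 1)
    (A : Fin (N - K) × Fin m → Ω → ℝ)
    (hmeas : ∀ p, Measurable (A p))
    (hindep : iIndepFun A μ)
    (h01 : ∀ p ω, A p ω = 0 ∨ A p ω = 1)
    (hp : ∀ p, μ {ω | A p ω = 1} = ENNReal.ofReal (1 / 2)) :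
    ENNReal.ofReal (1 - 2 * δ) ≤
      μ {ω | (((Finset.univ.filter (fun j : Fin (N - K) =>
              (1 / 2 + β) * m ≤ ∑ t : Fin m, A (j, t) ω)).card : ℝ)
            + ((Finset.univ.filter (fun j : Fin (N - K) =>
              (1 / 2 + β) * m ≤ ∑ t : Fin m, (1 - A (j, t) ω))).card : ℝ))
          ≤ 8 * N * Real.exp (-2 * β ^ 2 * m) + 6 * Real.log (1 / δ)} := by
  classical
  set c : ℝ := (1 / 2 + β) * m with hc
  set ε : ℝ := Real.exp (-2 * β ^ 2 * m) with hε
  have hε0 : 0 ≤ ε := (exp_pos _).le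
  set a : ℝ := 8 * N * ε + 6 * Real.log (1 / δ) with ha
  set Y : Fin (N - K) → Ω → ℝ :=
    fun j ω => if c ≤ ∑ t : Fin m, A (j, t) ω then 1 else 0 with hY
  set Z : Fin (N - K) → Ω → ℝ :=
    fun j ω => if c ≤ ∑ t : Fin m, (1 - A (j, t) ω) then 1 else 0 with hZ
  set W : Fin (N - K) → Ω → ℝ := fun j => Y j + Z j with hW
  -- measurability
  have hTm : ∀ j, Measurable (fun ω => ∑ t : Fin m, A (j, t) ω) :=
    fun j => Finset.measurable_sum _ fun t _ => hmeas (j, t)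
  have hTm' : ∀ j, Measurable (fun ω => ∑ t : Fin m, (1 - A (j, t) ω)) :=
    fun j => Finset.measurable_sum _ fun t _ => measurable_const.sub (hmeas (j, t))
  have hEs : ∀ j, MeasurableSet {ω | c ≤ ∑ t : Fin m, A (j, t) ω} :=
    fun j => measurableSet_le measurable_const (hTm j)
  have hFs : ∀ j, MeasurableSet {ω | c ≤ ∑ t : Fin m, (1 - A (j, t) ω)} :=
    fun j => measurableSet_le measurable_const (hTm' j)
  have hYmeas : ∀ j, Measurable (Y j) :=
    fun j => Measurable.ite (hEs j) measurable_const measurable_const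
  have hZmeas : ∀ j, Measurable (Z j) :=
    fun j => Measurable.ite (hFs j) measurable_const measurable_const
  have hWmeas : ∀ j, Measurable (W j) := fun j => (hYmeas j).add (hZmeas j)
  have h01Y : ∀ j ω, Y j ω = 0 ∨ Y j ω = 1 := by
    intro j ω; simp only [hY]; split <;> simp
  have h01Z : ∀ j ω, Z j ω = 0 ∨ Z j ω = 1 := by
    intro j ω; simp only [hZ]; split <;> simp
  -- expectations
  have hinj : ∀ j : Fin (N - K), Function.Injective (fun t : Fin m => (j, t)) :=
    fun j a b hab => (Prod.ext_iff.1 hab).2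
  have hEY : ∀ j, ∫ ω, Y j ω ∂μ ≤ ε := by
    intro j
    rw [aux_integral_01 (hYmeas j) (h01Y j)]
    have hset : {ω | Y j ω = 1} = {ω | c ≤ ∑ t : Fin m, A (j, t) ω} := by
      ext ω; simp only [Set.mem_setOf_eq, hY]
      split <;> rename_i h
      · exact iff_of_true rfl h
      · exact iff_of_false (by norm_num) h
    rw [hset]
    exact aux_tail hβ0 (fun t => A (j, t)) (fun t => hmeas (j, t))
      (aux_indep_precomp hindep _ (hinj j)) (fun t ω => h01 (j, t) ω)
      (fun t => hp (j, t))
  have hEZ : ∀ j, ∫ ω, Z j ω ∂μ ≤ ε := by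
    intro j
    rw [aux_integral_01 (hZmeas j) (h01Z j)]
    have hset : {ω | Z j ω = 1} = {ω | c ≤ ∑ t : Fin m, (1 - A (j, t) ω)} := by
      ext ω; simp only [Set.mem_setOf_eq, hZ]
      split <;> rename_i h
      · exact iff_of_true rfl h
      · exact iff_of_false (by norm_num) h
    rw [hset]
    have hind' : iIndepFun
        (fun t : Fin m => fun ω => 1 - A (j, t) ω) μ :=
      (aux_indep_precomp hindep (fun t : Fin m => (j, t)) (hinj j)).comp
        (fun _ => fun x : ℝ => 1 - x) (fun _ => measurable_const.sub measurable_id)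
    refine aux_tail hβ0 _ (fun t => measurable_const.sub (hmeas (j, t))) hind'
      (fun t ω => by rcases h01 (j, t) ω with h | h <;> simp [h]) (fun t => ?_)
    have hcompl : {ω | 1 - A (j, t) ω = 1} = {ω | A (j, t) ω = 1}ᶜ := by
      ext ω
      simp only [Set.mem_setOf_eq, Set.mem_compl_iff, sub_eq_self]
      constructor
      · intro h h1; rw [h1] at h; norm_num at h
      · intro h; exact (h01 (j, t) ω).resolve_right h
    have hms : MeasurableSet {ω | A (j, t) ω = 1} := hmeas (j, t) (measurableSet_singleton 1)
    rw [hcompl, prob_compl_eq_one_sub hms, hp (j, t),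
      show (1 : ENNReal) = ENNReal.ofReal 1 by simp,
      ← ENNReal.ofReal_sub 1 (by norm_num : (0:ℝ) ≤ 1 / 2)]
    norm_num
  -- independence step
  have indep_step : ∀ (s : Finset (Fin (N - K))) (i : Fin (N - K)), i ∉ s →
      IndepFun (W i) (∑ j ∈ s, W j) μ := by
    intro s i hi
    have hST : Disjoint (({i} : Finset (Fin (N - K))) ×ˢ Finset.univ)
        (s ×ˢ (Finset.univ : Finset (Fin m))) := by
      rw [Finset.disjoint_left]
      intro p hp1 hp2
      rw [Finset.mem_product, Finset.mem_singleton] at hp1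
      rw [Finset.mem_product] at hp2
      exact hi (hp1.1 ▸ hp2.1)
    have base := hindep.indepFun_finset _ _ hST hmeas
    have memS : ∀ t : Fin m, ((i, t) : Fin (N - K) × Fin m)
        ∈ ({i} : Finset (Fin (N - K))) ×ˢ Finset.univ :=
      fun t => Finset.mem_product.mpr ⟨Finset.mem_singleton_self i, Finset.mem_univ t⟩
    have memT : ∀ (j : {x // x ∈ s}) (t : Fin m), ((j.1, t) : Fin (N - K) × Fin m)
        ∈ s ×ˢ (Finset.univ : Finset (Fin m)) :=
      fun j t => Finset.mem_product.mpr ⟨j.2, Finset.mem_univ t⟩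
    set g1 : ((({i} : Finset (Fin (N - K))) ×ˢ (Finset.univ : Finset (Fin m))) → ℝ) → ℝ :=
      fun v => (if c ≤ ∑ t : Fin m, v ⟨(i, t), memS t⟩ then 1 else 0)
        + (if c ≤ ∑ t : Fin m, (1 - v ⟨(i, t), memS t⟩) then 1 else 0) with hg1
    set g2 : ((s ×ˢ (Finset.univ : Finset (Fin m)) : Finset (Fin (N - K) × Fin m)) → ℝ) → ℝ :=
      fun v => ∑ j ∈ s.attach,
        ((if c ≤ ∑ t : Fin m, v ⟨(j.1, t), memT j t⟩ then 1 else 0)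
        + (if c ≤ ∑ t : Fin m, (1 - v ⟨(j.1, t), memT j t⟩) then 1 else 0)) with hg2
    have hg1m : Measurable g1 := by
      apply Measurable.add <;>
      · apply Measurable.ite _ measurable_const measurable_const
        apply measurableSet_le measurable_const
        apply Finset.measurable_sum
        intro t _
        first
          | exact measurable_pi_apply _
          | exact measurable_const.sub (measurable_pi_apply _)
    have hg2m : Measurable g2 := by
      apply Finset.measurable_sum
      intro j _
      apply Measurable.add <;>
      · apply Measurable.ite _ measurable_const measurable_const
        apply measurableSet_le measurable_const
        apply Finset.measurable_sum
        intro t _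
        first
          | exact measurable_pi_apply _
          | exact measurable_const.sub (measurable_pi_apply _)
    have hcomp := base.comp hg1m hg2m
    have e1 : g1 ∘ (fun ω (p : (({i} : Finset (Fin (N - K))) ×ˢ (Finset.univ : Finset (Fin m)))) => A p ω) = W i := by
      funext ω
      simp only [Function.comp_apply, hg1, hW, hY, hZ, Pi.add_apply]
    have e2 : g2 ∘ (fun ω (p : (s ×ˢ (Finset.univ : Finset (Fin m)) : Finset (Fin (N - K) × Fin m))) => A p ω)
        = ∑ j ∈ s, W j := by
      funext ω
      simp only [Function.comp_apply, hg2, Finset.sum_apply, hW, hY, hZ, Pi.add_apply]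
      rw [← Finset.sum_attach s (fun j => Y j ω + Z j ω)]
    rw [e1, e2] at hcomp
    exact hcomp
  -- mgf product
  set l : ℝ := Real.log 2 / 2 with hldef
  have hl0 : 0 ≤ l := by
    have := Real.log_nonneg (by norm_num : (1:ℝ) ≤ 2)
    positivity
  have hexp2l : Real.exp (2 * l) = 2 := by
    rw [hldef, show 2 * (Real.log 2 / 2) = Real.log 2 by ring]
    exact Real.exp_log two_pos
  have hexpl : Real.exp l ≤ 2 := by
    calc Real.exp l ≤ Real.exp (2 * l) := exp_le_exp.2 (by linarith)
      _ = 2 := hexp2l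
  have key : ∀ s : Finset (Fin (N - K)),
      mgf (∑ j ∈ s, W j) μ l = ∏ j ∈ s, mgf (W j) μ l := by
    intro s
    induction s using Finset.induction_on with
    | empty => simp [mgf_zero_fun]
    | @insert i s hi ih =>
      rw [Finset.sum_insert hi,
        (indep_step s i hi).mgf_add (((hWmeas i).const_mul l).exp.aestronglyMeasurable)
          (aestronglyMeasurable_exp_mul_sum fun j _ =>
            (((hWmeas j).const_mul l).exp.aestronglyMeasurable)),
        ih, Finset.prod_insert hi]
  -- mgf of each W j
  have hW_mgf : ∀ j, mgf (W j) μ l ≤ Real.exp (2 * ε) := by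
    intro j
    have hpt : ∀ ω, Real.exp (l * W j ω) ≤ 1 + (Y j ω + Z j ω) := by
      intro ω
      have hw : W j ω = Y j ω + Z j ω := rfl
      rcases h01Y j ω with hy | hy <;> rcases h01Z j ω with hz | hz
      · rw [hw, hy, hz]; simp
      · rw [hw, hy, hz, show l * (0 + 1) = l by ring]; linarith [hexpl]
      · rw [hw, hy, hz, show l * (1 + 0) = l by ring]; linarith [hexpl]
      · rw [hw, hy, hz, show l * (1 + 1) = 2 * l by ring, hexp2l]; norm_num
    have h_int_YZ : Integrable (fun ω => Y j ω + Z j ω) μ :=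
      (aux_integrable_01 (hYmeas j) (h01Y j)).add (aux_integrable_01 (hZmeas j) (h01Z j))
    have h_int_rhs : Integrable (fun ω => 1 + (Y j ω + Z j ω)) μ :=
      (integrable_const 1).add h_int_YZ
    have h_int_lhs : Integrable (fun ω => Real.exp (l * W j ω)) μ := by
      refine Integrable.mono' h_int_rhs (((hWmeas j).const_mul l).exp.aestronglyMeasurable)
        (ae_of_all _ fun ω => ?_)
      rw [Real.norm_eq_abs, abs_of_pos (exp_pos _)]
      exact hpt ω
    have step : mgf (W j) μ l ≤ 1 + (∫ ω, Y j ω ∂μ + ∫ ω, Z j ω ∂μ) := by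
      calc mgf (W j) μ l = ∫ ω, Real.exp (l * W j ω) ∂μ := rfl
        _ ≤ ∫ ω, (1 + (Y j ω + Z j ω)) ∂μ := integral_mono h_int_lhs h_int_rhs hpt
        _ = 1 + (∫ ω, Y j ω ∂μ + ∫ ω, Z j ω ∂μ) := by
            rw [integral_add (integrable_const 1) h_int_YZ, integral_const,
              integral_add (aux_integrable_01 (hYmeas j) (h01Y j))
                (aux_integrable_01 (hZmeas j) (h01Z j))]
            simp
    have h2 : 1 + (∫ ω, Y j ω ∂μ + ∫ ω, Z j ω ∂μ) ≤ 1 + 2 * ε := by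
      have := hEY j; have := hEZ j; linarith
    have h3 : 1 + 2 * ε ≤ Real.exp (2 * ε) := by
      have := Real.add_one_le_exp (2 * ε); linarith
    linarith
  -- mgf of total sum
  have hNK : ((N - K : ℕ) : ℝ) ≤ (N : ℝ) := Nat.cast_le.2 (Nat.sub_le N K)
  have hS_mgf : mgf (∑ j : Fin (N - K), W j) μ l ≤ Real.exp (2 * N * ε) := by
    rw [key Finset.univ]
    calc (∏ j : Fin (N - K), mgf (W j) μ l) ≤ ∏ _j : Fin (N - K), Real.exp (2 * ε) :=
          Finset.prod_le_prod (fun j _ => mgf_nonneg) (fun j _ => hW_mgf j)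
      _ = Real.exp (2 * ε) ^ (N - K : ℕ) := by
          rw [Finset.prod_const, Finset.card_univ, Fintype.card_fin]
      _ = Real.exp (2 * ε * (N - K : ℕ)) := by
          rw [← Real.exp_nat_mul]; congr 1; ring
      _ ≤ Real.exp (2 * N * ε) := by
          apply exp_le_exp.2
          nlinarith [hε0, hNK, (by positivity : (0:ℝ) ≤ ((N - K : ℕ) : ℝ))]
  -- bounds on W values for integrability
  have hWle : ∀ j ω, W j ω ≤ 2 := by
    intro j ω
    rcases h01Y j ω with hy | hy <;> rcases h01Z j ω with hz | hz <;>
      simp [hW, Pi.add_apply, hy, hz] <;> norm_num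
  have hW0 : ∀ j ω, 0 ≤ W j ω := by
    intro j ω
    rcases h01Y j ω with hy | hy <;> rcases h01Z j ω with hz | hz <;>
      simp [hW, Pi.add_apply, hy, hz] <;> norm_num
  have hSmeas : Measurable (fun ω => ∑ j : Fin (N - K), W j ω) :=
    Finset.measurable_sum _ fun j _ => hWmeas j
  have hSeq : (∑ j : Fin (N - K), W j) = fun ω => ∑ j : Fin (N - K), W j ω :=
    funext fun ω => Finset.sum_apply _ _ _
  have hSmeas' : Measurable (∑ j : Fin (N - K), W j) := by rw [hSeq]; exact hSmeas
  have h_int_S : Integrable (fun ω => Real.exp (l * (∑ j : Fin (N - K), W j) ω)) μ := by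
    refine Integrable.mono' (integrable_const (Real.exp (l * (2 * (N : ℝ)))))
      ?_ (ae_of_all _ fun ω => ?_)
    · exact (hSmeas'.const_mul l).exp.aestronglyMeasurable
    · rw [Real.norm_eq_abs, abs_of_pos (exp_pos _)]
      apply exp_le_exp.2
      apply mul_le_mul_of_nonneg_left _ hl0
      rw [Finset.sum_apply]
      calc (∑ j : Fin (N - K), W j ω) ≤ ∑ _j : Fin (N - K), (2:ℝ) :=
            Finset.sum_le_sum fun j _ => hWle j ω
        _ = 2 * (N - K : ℕ) := by rw [Finset.sum_const, Finset.card_univ, Fintype.card_fin]; ring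
        _ ≤ 2 * (N : ℝ) := by linarith
  -- final Chernoff
  have hch := measure_ge_le_exp_mul_mgf (μ := μ) (X := ∑ j : Fin (N - K), W j) a hl0 h_int_S
  have hL0 : 0 ≤ Real.log (1 / δ) := Real.log_nonneg (by rw [le_div_iff₀ hδ0]; linarith)
  have hNε0 : 0 ≤ (N : ℝ) * ε := by positivity
  have hlog2 : Real.log 2 > 0.6931471803 := Real.log_two_gt_d9
  have h_tail : (μ {ω | a ≤ (∑ j : Fin (N - K), W j) ω}).toReal ≤ 2 * δ := by
    refine hch.trans ?_
    calc Real.exp (-l * a) * mgf (∑ j : Fin (N - K), W j) μ l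
        ≤ Real.exp (-l * a) * Real.exp (2 * N * ε) :=
          mul_le_mul_of_nonneg_left hS_mgf (exp_nonneg _)
      _ = Real.exp (2 * N * ε - l * a) := by rw [← Real.exp_add]; ring_nf
      _ ≤ 2 * δ := by
          rw [show (2 * δ : ℝ) = Real.exp (Real.log (2 * δ)) from
            (Real.exp_log (by linarith)).symm]
          apply exp_le_exp.2
          rw [Real.log_mul (by norm_num) (ne_of_gt hδ0)]
          have hlogδ : Real.log δ = - Real.log (1 / δ) := by
            rw [one_div, Real.log_inv]; ring
          rw [hlogδ, ha, hldef]
          nlinarith [mul_nonneg hL0 (le_of_lt (lt_trans (by norm_num) hlog2)), hlog2, hL0, hNε0]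
  -- convert to the stated event
  have hbad : μ ({ω | (∑ j : Fin (N - K), W j) ω ≤ a}ᶜ) ≤ ENNReal.ofReal (2 * δ) := by
    have hsub : {ω | (∑ j : Fin (N - K), W j) ω ≤ a}ᶜ
        ⊆ {ω | a ≤ (∑ j : Fin (N - K), W j) ω} := by
      intro ω hω
      simp only [Set.mem_compl_iff, Set.mem_setOf_eq, not_le] at hω
      exact le_of_lt hω
    exact le_trans (measure_mono hsub)
      ((ENNReal.le_ofReal_iff_toReal_le (measure_ne_top _ _) (by linarith)).2 h_tail)
  have hgood_meas : MeasurableSet {ω | (∑ j : Fin (N - K), W j) ω ≤ a} := by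
    exact measurableSet_le hSmeas' measurable_const
  have hgood : ENNReal.ofReal (1 - 2 * δ) ≤ μ {ω | (∑ j : Fin (N - K), W j) ω ≤ a} := by
    have h1 : μ {ω | (∑ j : Fin (N - K), W j) ω ≤ a}
        = 1 - μ ({ω | (∑ j : Fin (N - K), W j) ω ≤ a}ᶜ) := by
      rw [prob_compl_eq_one_sub hgood_meas]
      rw [ENNReal.sub_sub_cancel (by norm_num) (prob_le_one)]
    rw [h1]
    calc ENNReal.ofReal (1 - 2 * δ)
        = ENNReal.ofReal 1 - ENNReal.ofReal (2 * δ) := ENNReal.ofReal_sub 1 (by linarith)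
      _ = 1 - ENNReal.ofReal (2 * δ) := by norm_num
      _ ≤ 1 - μ ({ω | (∑ j : Fin (N - K), W j) ω ≤ a}ᶜ) := tsub_le_tsub_left hbad 1
  refine le_trans hgood (le_of_eq ?_)
  congr 1
  ext ω
  simp only [Set.mem_setOf_eq, Finset.sum_apply]
  have hcY : ((Finset.univ.filter (fun j : Fin (N - K) =>
      c ≤ ∑ t : Fin m, A (j, t) ω)).card : ℝ) = ∑ j : Fin (N - K), Y j ω := by
    rw [Finset.card_filter]
    push_cast
    refine Finset.sum_congr rfl fun j _ => ?_
    simp only [hY]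
  have hcZ : ((Finset.univ.filter (fun j : Fin (N - K) =>
      c ≤ ∑ t : Fin m, (1 - A (j, t) ω))).card : ℝ) = ∑ j : Fin (N - K), Z j ω := by
    rw [Finset.card_filter]
    push_cast
    refine Finset.sum_congr rfl fun j _ => ?_
    simp only [hZ]
  constructor
  · intro h
    rw [hcY, hcZ]
    simpa [hW, Pi.add_apply, Finset.sum_add_distrib, ha, hε] using h
  · intro h
    rw [hcY, hcZ] at h
    simpa [hW, Pi.add_apply, Finset.sum_add_distrib, ha, hε] using h
end

section
/- In the learning model with parameters N, K, γ, m, let 0 ≤ β ≤ γ and 0 < δ ≤ 1. With probability at least 1 − δ over the random draw of the m training examples, the number of relevant features included in M_β (relevant features that agree with the class label on at least a 1/2 + β fraction of the m training examples) is at least K − 4·K·exp(−2·(γ−β)²·m) − 3·ln(1/δ). -/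
open MeasureTheory ProbabilityTheory

lemma bern_mgf_bound (p θ : ℝ) (hp0 : 0 ≤ p) (hp1 : p ≤ 1) :
    1 - p + p * Real.exp θ ≤ Real.exp (θ * p + θ ^ 2 / 8) := by
  have hD : ∀ x : ℝ, 0 < 1 - p + p * Real.exp x := by
    intro x
    rcases eq_or_lt_of_le hp0 with h | h
    · simp [← h]
    · nlinarith [Real.exp_pos x]
  set g : ℝ → ℝ := fun x => x * p + x ^ 2 / 8 - Real.log (1 - p + p * Real.exp x) with hgdef
  set g1 : ℝ → ℝ := fun x => p + x / 4 - p * Real.exp x / (1 - p + p * Real.exp x) with hg1def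
  have hDderiv : ∀ x : ℝ, HasDerivAt (fun x : ℝ => 1 - p + p * Real.exp x) (p * Real.exp x) x :=
    fun x => ((Real.hasDerivAt_exp x).const_mul p).const_add (1 - p)
  have hg : ∀ x, HasDerivAt g (g1 x) x := by
    intro x
    have h2 := (hDderiv x).log (hD x).ne'
    have h3 : HasDerivAt (fun x : ℝ => x * p + x ^ 2 / 8) (p + x / 4) x := by
      have := ((hasDerivAt_id x).mul_const p).add ((hasDerivAt_pow 2 x).div_const 8)
      refine this.congr_deriv ?_
      rw [show (2:ℕ) - 1 = 1 from rfl]; push_cast; ring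
    exact h3.sub h2
  have hg1 : ∀ x, HasDerivAt g1
      (1 / 4 - (p * Real.exp x * (1 - p + p * Real.exp x) - p * Real.exp x * (p * Real.exp x)) /
        (1 - p + p * Real.exp x) ^ 2) x := by
    intro x
    have h4 : HasDerivAt (fun x : ℝ => p * Real.exp x) (p * Real.exp x) x :=
      (Real.hasDerivAt_exp x).const_mul p
    have h5 := h4.div (hDderiv x) (hD x).ne'
    have h6 : HasDerivAt (fun x : ℝ => p + x / 4) (1 / 4) x := by
      simpa using ((hasDerivAt_id x).div_const 4).const_add p
    exact h6.sub h5
  have hg1mono : Monotone g1 := by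
    apply monotone_of_deriv_nonneg
    · exact fun x => (hg1 x).differentiableAt
    · intro x
      rw [(hg1 x).deriv]
      have hy : 0 ≤ p * Real.exp x := mul_nonneg hp0 (Real.exp_pos x).le
      rw [sub_nonneg, div_le_iff₀ (pow_pos (hD x) 2)]
      nlinarith [sq_nonneg (1 - p - p * Real.exp x)]
  have hg10 : g1 0 = 0 := by
    simp [hg1def]
  have hg0 : g 0 = 0 := by
    simp [hgdef]
  have key : ∀ θ : ℝ, 0 ≤ g θ := by
    intro θ
    rcases le_total 0 θ with h | h
    · have hmono : MonotoneOn g (Set.Icc 0 θ) := by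
        apply monotoneOn_of_deriv_nonneg (convex_Icc 0 θ)
        · exact fun x _ => ((hg x).differentiableAt.continuousAt).continuousWithinAt
        · exact fun x hx => ((hg x).differentiableAt).differentiableWithinAt
        · intro x hx
          rw [(hg x).deriv]
          rw [interior_Icc] at hx
          have : g1 0 ≤ g1 x := hg1mono hx.1.le
          linarith [hg10 ▸ this]
      have := hmono (Set.left_mem_Icc.2 h) (Set.right_mem_Icc.2 h) h
      linarith [hg0 ▸ this]
    · have hmono : AntitoneOn g (Set.Icc θ 0) := by
        apply antitoneOn_of_deriv_nonpos (convex_Icc θ 0)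
        · exact fun x _ => ((hg x).differentiableAt.continuousAt).continuousWithinAt
        · exact fun x hx => ((hg x).differentiableAt).differentiableWithinAt
        · intro x hx
          rw [(hg x).deriv]
          rw [interior_Icc] at hx
          have : g1 x ≤ g1 0 := hg1mono hx.2.le
          linarith [hg10 ▸ this]
      have := hmono (Set.left_mem_Icc.2 h) (Set.right_mem_Icc.2 h) h
      linarith [hg0 ▸ this]
  have h := key θ
  have hlog : Real.log (1 - p + p * Real.exp θ) ≤ θ * p + θ ^ 2 / 8 := by
    simp only [hgdef] at h; linarith
  calc 1 - p + p * Real.exp θ = Real.exp (Real.log (1 - p + p * Real.exp θ)) :=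
        (Real.exp_log (hD θ)).symm
    _ ≤ _ := Real.exp_le_exp.2 hlog

lemma iIndepFun_comp_of_injective {Ω ι ι' α : Type*} [MeasurableSpace Ω]
    [mα : MeasurableSpace α] {μ : Measure Ω}
    {f : ι → Ω → α} (h : iIndepFun f μ) (g : ι' → ι)
    (hg : Function.Injective g) :
    iIndepFun (fun i => f (g i)) μ := by
  classical
  rw [iIndepFun_iff_measure_inter_preimage_eq_mul] at h ⊢
  intro S sets hsets
  set sets' : ι → Set α := fun j =>
    if h : ∃ i ∈ S, g i = j then sets h.choose else Set.univ with hsets'def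
  have hgood : ∀ i ∈ S, sets' (g i) = sets i := by
    intro i hi
    have hex : ∃ i' ∈ S, g i' = g i := ⟨i, hi, rfl⟩
    have hspec := hex.choose_spec
    have heq : hex.choose = i := hg hspec.2
    simp only [hsets'def, dif_pos hex, heq]
  have h1 : (⋂ i ∈ S, f (g i) ⁻¹' sets i) = ⋂ j ∈ S.image g, f j ⁻¹' sets' j := by
    ext ω
    simp only [Set.mem_iInter, Finset.mem_image]
    constructor
    · rintro hω j ⟨i, hi, rfl⟩
      rw [hgood i hi]; exact hω i hi
    · intro hω i hi
      rw [← hgood i hi]; exact hω (g i) ⟨i, hi, rfl⟩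
  have h2 : ∀ j ∈ S.image g, MeasurableSet (sets' j) := by
    intro j hj
    rcases Finset.mem_image.1 hj with ⟨i, hi, rfl⟩
    rw [hgood i hi]; exact hsets i hi
  rw [h1, h (S.image g) h2, Finset.prod_image (fun i hi i' hi' hii' => hg hii')]
  exact Finset.prod_congr rfl fun i hi => by rw [hgood i hi]

/-- Grouping: the rows of an independent rectangular family are independent as
vector-valued random variables. -/
lemma iIndepFun_rows {Ω K m : Type*} [MeasurableSpace Ω] [Fintype m]
    {μ : Measure Ω} [IsProbabilityMeasure μ]
    (W : K × m → Ω → ℝ)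
    (hmeas : ∀ p, Measurable (W p))
    (hindep : iIndepFun W μ) :
    iIndepFun
      (fun (j : K) (ω : Ω) (t : m) => W (j, t) ω) μ := by
  classical
  set G : K → Ω → (m → ℝ) := fun j ω t => W (j, t) ω with hGdef
  have hGmeas : ∀ j, Measurable (G j) := fun j => measurable_pi_lambda _ fun t => hmeas (j, t)
  set π : K → Set (Set Ω) := fun j =>
    {s | ∃ B : m → Set ℝ, (∀ t, MeasurableSet (B t)) ∧ s = ⋂ t, W (j, t) ⁻¹' B t} with hπdef
  have hπ_pi : ∀ j, IsPiSystem (π j) := by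
    rintro j s ⟨B, hB, rfl⟩ s' ⟨B', hB', rfl⟩ -
    refine ⟨fun t => B t ∩ B' t, fun t => (hB t).inter (hB' t), ?_⟩
    ext ω
    simp only [Set.mem_inter_iff, Set.mem_iInter, Set.mem_preimage]
    exact ⟨fun ⟨h1, h2⟩ t => ⟨h1 t, h2 t⟩, fun h => ⟨fun t => (h t).1, fun t => (h t).2⟩⟩
  have hgen : ∀ j, MeasurableSpace.comap (G j) MeasurableSpace.pi =
      MeasurableSpace.generateFrom (π j) := by
    intro j
    rw [← generateFrom_pi, MeasurableSpace.comap_generateFrom]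
    congr 1
    ext s
    simp only [Set.mem_image, Set.mem_setOf_eq]
    constructor
    · rintro ⟨u, ⟨B, hB, rfl⟩, rfl⟩
      rw [Set.mem_pi] at hB  -- maybe not needed
      refine ⟨B, fun t => hB t (Set.mem_univ t), ?_⟩
      ext ω
      simp [hGdef, Set.mem_pi]
    · rintro ⟨B, hB, rfl⟩
      refine ⟨Set.pi Set.univ B, ⟨B, fun t _ => hB t, rfl⟩, ?_⟩
      ext ω
      simp [hGdef, Set.mem_pi]
  have h_ind : iIndepSets π μ := by
    rw [iIndepSets_iff]
    intro S sets hsets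
    have hB : ∀ j, ∃ B : m → Set ℝ,
        j ∈ S → (∀ t, MeasurableSet (B t)) ∧ sets j = ⋂ t, W (j, t) ⁻¹' B t := by
      intro j
      by_cases hj : j ∈ S
      · obtain ⟨B, hB1, hB2⟩ := hsets j hj
        exact ⟨B, fun _ => ⟨hB1, hB2⟩⟩
      · exact ⟨fun _ => Set.univ, fun h => absurd h hj⟩
    choose B hBspec using hB
    have hrw : ∀ j ∈ S, sets j = ⋂ t, W (j, t) ⁻¹' B j t := fun j hj => (hBspec j hj).2
    have hBmeas : ∀ j ∈ S, ∀ t, MeasurableSet (B j t) := fun j hj => (hBspec j hj).1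
    have key := hindep.measure_inter_preimage_eq_mul (S ×ˢ (Finset.univ : Finset m))
      (sets := fun p => B p.1 p.2)
      (fun p hp => hBmeas p.1 (Finset.mem_product.1 hp).1 p.2)
    have hint : (⋂ j ∈ S, sets j) = ⋂ p ∈ S ×ˢ (Finset.univ : Finset m), W p ⁻¹' B p.1 p.2 := by
      ext ω
      simp only [Set.mem_iInter, Finset.mem_product, Finset.mem_univ, and_true]
      constructor
      · intro hω p hp
        have := hω p.1 hp
        rw [hrw p.1 hp] at this
        simpa using Set.mem_iInter.1 this p.2
      · intro hω j hj
        rw [hrw j hj]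
        exact Set.mem_iInter.2 fun t => hω (j, t) hj
    have hsingle : ∀ j ∈ S, μ (sets j) = ∏ t : m, μ (W (j, t) ⁻¹' B j t) := by
      intro j hj
      have key2 := hindep.measure_inter_preimage_eq_mul ({j} ×ˢ (Finset.univ : Finset m))
        (sets := fun p => B p.1 p.2)
        (fun p hp => by
          rcases Finset.mem_product.1 hp with ⟨h1, _⟩
          rw [Finset.mem_singleton] at h1
          have := hBmeas j hj p.2
          show MeasurableSet (B p.1 p.2)
          rwa [← h1] at this)
      have hint2 : sets j = ⋂ p ∈ ({j} : Finset K) ×ˢ (Finset.univ : Finset m),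
          W p ⁻¹' B p.1 p.2 := by
        rw [hrw j hj]
        ext ω
        simp only [Set.mem_iInter, Finset.mem_product, Finset.mem_singleton, Finset.mem_univ,
          and_true, Set.mem_preimage]
        constructor
        · intro hω p hp
          rcases p with ⟨j', t⟩
          dsimp only at hp ⊢
          subst hp
          exact hω t
        · intro hω t
          exact hω (j, t) rfl
      rw [hint2, key2, Finset.prod_product]
      simp
    rw [hint, key, Finset.prod_product]
    exact (Finset.prod_congr rfl hsingle).symm
  have := iIndepSets.iIndep (m := fun j => MeasurableSpace.comap (G j) MeasurableSpace.pi)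
    (fun j => (hGmeas j).comap_le) π hπ_pi hgen h_ind
  rwa [iIndepFun_iff_iIndep]

lemma integrable_exp_mul_of_bounded {Ω : Type*} [MeasurableSpace Ω] {μ : Measure Ω}
    [IsProbabilityMeasure μ] {X : Ω → ℝ} (hX : Measurable X) {C : ℝ} (θ : ℝ)
    (hC : ∀ ω, |X ω| ≤ C) : Integrable (fun ω => Real.exp (θ * X ω)) μ := by
  refine Integrable.mono' (integrable_const (Real.exp (|θ| * C)))
    (Measurable.aestronglyMeasurable (by measurability)) (ae_of_all _ fun ω => ?_)
  rw [Real.norm_eq_abs, Real.abs_exp]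
  apply Real.exp_le_exp.2
  calc θ * X ω ≤ |θ * X ω| := le_abs_self _
    _ = |θ| * |X ω| := abs_mul _ _
    _ ≤ |θ| * C := mul_le_mul_of_nonneg_left (hC ω) (abs_nonneg θ)

lemma mgf_of_indicator {Ω : Type*} [MeasurableSpace Ω] {μ : Measure Ω}
    [IsProbabilityMeasure μ] {X : Ω → ℝ} (hX : Measurable X)
    (h01 : ∀ ω, X ω = 0 ∨ X ω = 1) (θ : ℝ) :
    mgf X μ θ = 1 + (Real.exp θ - 1) * (μ {ω | X ω = 1}).toReal := by
  have hA : MeasurableSet {ω | X ω = 1} := hX (measurableSet_singleton 1)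
  have heq : (fun ω => Real.exp (θ * X ω)) =
      fun ω => 1 + (Real.exp θ - 1) * Set.indicator {ω | X ω = 1} (fun _ => (1 : ℝ)) ω := by
    funext ω
    rcases h01 ω with h | h
    · have : ω ∉ {ω | X ω = 1} := by simp [h]
      simp [h, Set.indicator_of_notMem this]
    · have : ω ∈ {ω | X ω = 1} := h
      simp [h, Set.indicator_of_mem this]
  rw [mgf, heq]
  rw [integral_add (integrable_const 1)]
  · rw [integral_const, integral_const_mul, integral_indicator_const _ hA]
    simp [mul_comm, Measure.real]
  · exact ((integrable_indicator_iff hA).2 (integrableOn_const (measure_ne_top μ _))).const_mul _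

lemma row_tail_bound {Ω : Type*} [MeasurableSpace Ω] (μ : Measure Ω) [IsProbabilityMeasure μ]
    {m : ℕ} (R : Fin m → Ω → ℝ) (hmeas : ∀ t, Measurable (R t))
    (hind : iIndepFun R μ)
    (h01 : ∀ t ω, R t ω = 0 ∨ R t ω = 1)
    (p ε : ℝ) (hp : ∀ t, (μ {ω | R t ω = 1}).toReal = p)
    (hp0 : 0 ≤ p) (hp1 : p ≤ 1) (hε : 0 ≤ ε) :
    (μ {ω | (∑ t, R t ω) ≤ (p - ε) * m}).toReal ≤ Real.exp (-2 * ε ^ 2 * m) := by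
  set θ : ℝ := -4 * ε with hθdef
  have hθ : θ ≤ 0 := by simp [hθdef]; linarith
  have hSmeas : Measurable (fun ω => ∑ t, R t ω) :=
    Finset.measurable_sum _ fun t _ => hmeas t
  have hbdd : ∀ ω, |∑ t, R t ω| ≤ (m : ℝ) := by
    intro ω
    calc |∑ t, R t ω| ≤ ∑ t, |R t ω| := Finset.abs_sum_le_sum_abs _ _
      _ ≤ ∑ _t : Fin m, (1 : ℝ) := Finset.sum_le_sum fun t _ => by
          rcases h01 t ω with h | h <;> simp [h]
      _ = (m : ℝ) := by simp
  have h_int : Integrable (fun ω => Real.exp (θ * ∑ t, R t ω)) μ :=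
    integrable_exp_mul_of_bounded hSmeas θ hbdd
  have hchern := measure_le_le_exp_mul_mgf (X := fun ω => ∑ t, R t ω) (μ := μ)
    ((p - ε) * m) hθ h_int
  have hmgf_eq : mgf (fun ω => ∑ t, R t ω) μ θ = (1 - p + p * Real.exp θ) ^ m := by
    have h1 : (fun ω => ∑ t, R t ω) = ∑ t : Fin m, R t := by
      funext ω; simp [Finset.sum_apply]
    rw [h1, hind.mgf_sum hmeas Finset.univ]
    have h2 : ∀ t : Fin m, mgf (R t) μ θ = 1 - p + p * Real.exp θ := by
      intro t
      rw [mgf_of_indicator (hmeas t) (h01 t) θ, hp t]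
      ring
    rw [Finset.prod_congr rfl fun t _ => h2 t, Finset.prod_const, Finset.card_univ,
      Fintype.card_fin]
  have hD0 : (0 : ℝ) ≤ 1 - p + p * Real.exp θ := by nlinarith [Real.exp_pos θ]
  have hmgf_le : mgf (fun ω => ∑ t, R t ω) μ θ ≤ Real.exp ((θ * p + θ ^ 2 / 8) * m) := by
    rw [hmgf_eq]
    calc (1 - p + p * Real.exp θ) ^ m ≤ (Real.exp (θ * p + θ ^ 2 / 8)) ^ m :=
        pow_le_pow_left₀ hD0 (bern_mgf_bound p θ hp0 hp1) m
      _ = Real.exp ((m : ℝ) * (θ * p + θ ^ 2 / 8)) := (Real.exp_nat_mul _ m).symm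
      _ = Real.exp ((θ * p + θ ^ 2 / 8) * m) := by rw [mul_comm]
  calc (μ {ω | (∑ t, R t ω) ≤ (p - ε) * m}).toReal
      ≤ Real.exp (-θ * ((p - ε) * m)) * mgf (fun ω => ∑ t, R t ω) μ θ := hchern
    _ ≤ Real.exp (-θ * ((p - ε) * m)) * Real.exp ((θ * p + θ ^ 2 / 8) * m) := by
        exact mul_le_mul_of_nonneg_left hmgf_le (Real.exp_pos _).le
    _ = Real.exp (-θ * ((p - ε) * m) + (θ * p + θ ^ 2 / 8) * m) := (Real.exp_add _ _).symm
    _ = Real.exp (-2 * ε ^ 2 * m) := by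
        congr 1
        rw [hθdef]
        ring

/-- **Lemma 5 (many relevant features).** In the learning model with parameters `N, K, γ, m`,
let `W (j, t)` be the indicator that the `j`-th relevant feature agrees with the class label on
the `t`-th training example; these `K·m` indicators are jointly independent, each equal to `1`
with probability `1/2 + γ`. For `0 ≤ β ≤ γ` and `0 < δ ≤ 1`, with probability at least `1 − δ`
the number of relevant features included in `M_β` (those agreeing with the label on at least a
`1/2 + β` fraction of the `m` training examples) is at least
`K − 4·K·exp(−2·(γ−β)²·m) − 3·ln(1/δ)`. -/
theorem many_relevant_features
    {Ω : Type*} [MeasurableSpace Ω] (μ : Measure Ω) [IsProbabilityMeasure μ]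
    (N K m : ℕ) (hKN : K ≤ N) (γ β δ : ℝ)
    (hβ0 : 0 ≤ β) (hβγ : β ≤ γ) (hγ : γ ≤ 1 / 2) (hδ0 : 0 < δ) (hδ1 : δ ≤ 1)
    (W : Fin K × Fin m → Ω → ℝ)
    (hmeas : ∀ p, Measurable (W p))
    (hindep : iIndepFun W μ)
    (h01 : ∀ p ω, W p ω = 0 ∨ W p ω = 1)
    (hp : ∀ p, μ {ω | W p ω = 1} = ENNReal.ofReal (1 / 2 + γ)) :
    ENNReal.ofReal (1 - δ) ≤
      μ {ω | (K : ℝ) - 4 * K * Real.exp (-2 * (γ - β) ^ 2 * m) - 3 * Real.log (1 / δ)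
          ≤ ((Finset.univ.filter (fun j : Fin K =>
            (1 / 2 + β) * m ≤ ∑ t : Fin m, W (j, t) ω)).card : ℝ)} := by
  classical
  set ε : ℝ := γ - β with hεdef
  have hε0 : 0 ≤ ε := by linarith
  set q : ℝ := Real.exp (-2 * ε ^ 2 * m) with hqdef
  have hq0 : 0 < q := Real.exp_pos _
  set L : ℝ := Real.log (1 / δ) with hLdef
  have hL0 : 0 ≤ L := Real.log_nonneg ((le_div_iff₀ hδ0).2 (by linarith))
  set c : ℝ := (1 / 2 + β) * m with hcdef
  set X : Fin K → Ω → ℝ := fun j ω => ∑ t, W (j, t) ω with hXdef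
  set E : Set Ω := {ω | (K : ℝ) - 4 * K * q - 3 * L ≤
      ((Finset.univ.filter (fun j : Fin K => c ≤ X j ω)).card : ℝ)} with hEdef
  show ENNReal.ofReal (1 - δ) ≤ μ E
  set a : ℝ := 4 * K * q + 3 * L with hadef
  by_cases hcase : (K : ℝ) ≤ a
  · have hEuniv : E = Set.univ := by
      apply Set.eq_univ_of_forall
      intro ω
      show (K : ℝ) - 4 * K * q - 3 * L ≤ _
      have : ((Finset.univ.filter (fun j : Fin K => c ≤ X j ω)).card : ℝ) ≥ 0 :=
        Nat.cast_nonneg _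
      have h2 : (K : ℝ) - 4 * K * q - 3 * L ≤ 0 := by rw [hadef] at hcase; linarith
      linarith
    rw [hEuniv, measure_univ]
    exact ENNReal.ofReal_le_one.2 (by linarith)
  push_neg at hcase
  -- main case
  have hXmeas : ∀ j, Measurable (X j) := fun j => Finset.measurable_sum _ fun t _ => hmeas (j, t)
  set F : Fin K → Ω → ℝ := fun j ω => if c ≤ X j ω then 0 else 1 with hFdef
  have hFmeas : ∀ j, Measurable (F j) := fun j =>
    Measurable.ite (measurableSet_le measurable_const (hXmeas j)) measurable_const
      measurable_const
  have hF01 : ∀ j ω, F j ω = 0 ∨ F j ω = 1 := by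
    intro j ω
    by_cases h : c ≤ X j ω <;> simp [hFdef, h]
  -- step 1: per-feature failure probability
  have hfail : ∀ j, (μ {ω | F j ω = 1}).toReal ≤ q := by
    intro j
    have hsub : {ω | F j ω = 1} ⊆ {ω | (∑ t, W (j, t) ω) ≤ (1 / 2 + γ - ε) * m} := by
      intro ω hω
      have h1 : ¬ (c ≤ X j ω) := by
        by_contra h
        simp only [hFdef, Set.mem_setOf_eq, if_pos h] at hω
        norm_num at hω
      have h2 : X j ω < c := lt_of_not_ge h1
      have : (1 / 2 + γ - ε) * m = c := by rw [hcdef, hεdef]; ring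
      rw [Set.mem_setOf_eq, this]
      exact le_of_lt h2
    have h3 := measure_mono (μ := μ) hsub
    have h4 := row_tail_bound μ (fun t => W (j, t)) (fun t => hmeas (j, t))
      (iIndepFun_comp_of_injective hindep (fun t => (j, t))
        (fun t t' h => congrArg Prod.snd h))
      (fun t ω => h01 (j, t) ω) (1 / 2 + γ) ε
      (fun t => by rw [hp (j, t)]; exact ENNReal.toReal_ofReal (by linarith))
      (by linarith) (by linarith) hε0
    calc (μ {ω | F j ω = 1}).toReal
        ≤ (μ {ω | (∑ t, W (j, t) ω) ≤ (1 / 2 + γ - ε) * m}).toReal :=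
          ENNReal.toReal_mono (measure_ne_top _ _) h3
      _ ≤ q := h4
  -- step 2: independence of the F's
  have hFind : iIndepFun F μ := by
    have hrows := iIndepFun_rows W hmeas hindep
    set φ : (Fin m → ℝ) → ℝ := fun v => if c ≤ ∑ t, v t then 0 else 1 with hφdef
    have hφmeas : Measurable φ := by
      apply Measurable.ite _ measurable_const measurable_const
      exact measurableSet_le measurable_const (Finset.measurable_sum _ fun t _ =>
        measurable_pi_apply t)
    exact hrows.comp (fun _ => φ) (fun _ => hφmeas)
  -- step 3: mgf of the failure count
  set SF : Ω → ℝ := fun ω => ∑ j, F j ω with hSFdef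
  have hSFmeas : Measurable SF := Finset.measurable_sum _ fun j _ => hFmeas j
  have hSFbdd : ∀ ω, |SF ω| ≤ (K : ℝ) := by
    intro ω
    calc |SF ω| ≤ ∑ j, |F j ω| := Finset.abs_sum_le_sum_abs _ _
      _ ≤ ∑ _j : Fin K, (1 : ℝ) := Finset.sum_le_sum fun j _ => by
          rcases hF01 j ω with h | h <;> simp [h]
      _ = (K : ℝ) := by simp
  have h_int : Integrable (fun ω => Real.exp (1 * SF ω)) μ :=
    integrable_exp_mul_of_bounded hSFmeas 1 hSFbdd
  have hmgf_le : mgf SF μ 1 ≤ Real.exp (2 * K * q) := by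
    have h1 : SF = ∑ j : Fin K, F j := by funext ω; simp [hSFdef, Finset.sum_apply]
    rw [h1, hFind.mgf_sum hFmeas Finset.univ]
    have h2 : ∀ j : Fin K, mgf (F j) μ 1 ≤ Real.exp (2 * q) := by
      intro j
      rw [mgf_of_indicator (hFmeas j) (hF01 j) 1]
      have he : Real.exp 1 - 1 ≤ 2 := by
        have := Real.exp_one_lt_d9
        norm_num at this ⊢
        linarith
      have hpj0 : (0 : ℝ) ≤ (μ {ω | F j ω = 1}).toReal := ENNReal.toReal_nonneg
      have he0 : (0 : ℝ) ≤ Real.exp 1 - 1 := by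
        have := Real.one_le_exp (by norm_num : (0:ℝ) ≤ 1)
        linarith
      calc 1 + (Real.exp 1 - 1) * (μ {ω | F j ω = 1}).toReal
          ≤ 1 + 2 * q := by nlinarith [hfail j]
        _ ≤ Real.exp (2 * q) := by linarith [Real.add_one_le_exp (2 * q)]
    calc ∏ j : Fin K, mgf (F j) μ 1 ≤ ∏ _j : Fin K, Real.exp (2 * q) :=
        Finset.prod_le_prod (fun j _ => mgf_nonneg) (fun j _ => h2 j)
      _ = Real.exp (2 * q) ^ K := by rw [Finset.prod_const, Finset.card_univ, Fintype.card_fin]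
      _ = Real.exp ((K : ℝ) * (2 * q)) := (Real.exp_nat_mul _ K).symm
      _ = Real.exp (2 * K * q) := by ring_nf
  -- step 4: Chernoff on the failure count
  have hchern := measure_ge_le_exp_mul_mgf (X := SF) (μ := μ) a (by norm_num : (0:ℝ) ≤ 1) h_int
  have htail : (μ {ω | a ≤ SF ω}).toReal ≤ δ := by
    have hKq0 : 0 ≤ (K : ℝ) * q := mul_nonneg (Nat.cast_nonneg _) hq0.le
    calc (μ {ω | a ≤ SF ω}).toReal ≤ Real.exp (-1 * a) * mgf SF μ 1 := hchern
      _ ≤ Real.exp (-1 * a) * Real.exp (2 * K * q) :=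
          mul_le_mul_of_nonneg_left hmgf_le (Real.exp_pos _).le
      _ = Real.exp (-1 * a + 2 * K * q) := (Real.exp_add _ _).symm
      _ ≤ Real.exp (-3 * L) := by
          apply Real.exp_le_exp.2
          rw [hadef]
          nlinarith
      _ = δ ^ 3 := by
          rw [hLdef, one_div, Real.log_inv]
          rw [show (-3 : ℝ) * -Real.log δ = (3 : ℕ) * Real.log δ by push_cast; ring]
          rw [← Real.log_pow, Real.exp_log (by positivity)]
      _ ≤ δ := by
          calc δ ^ 3 ≤ δ ^ 1 := pow_le_pow_of_le_one hδ0.le hδ1 (by norm_num)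
            _ = δ := pow_one δ
  -- step 5: conclude
  have hcard : ∀ ω, ((Finset.univ.filter (fun j : Fin K => c ≤ X j ω)).card : ℝ)
      = (K : ℝ) - SF ω := by
    intro ω
    have h1 : SF ω = ∑ j : Fin K, (if c ≤ X j ω then (0:ℝ) else 1) := rfl
    have h2 : ((Finset.univ.filter (fun j : Fin K => c ≤ X j ω)).card : ℝ)
        = ∑ j : Fin K, (if c ≤ X j ω then (1:ℝ) else 0) := by
      rw [Finset.card_filter]
      push_cast
      rfl
    rw [h2, h1, eq_sub_iff_add_eq, ← Finset.sum_add_distrib]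
    have h3 : ∀ j : Fin K,
        ((if c ≤ X j ω then (1:ℝ) else 0) + (if c ≤ X j ω then (0:ℝ) else 1)) = 1 := by
      intro j; split <;> norm_num
    rw [Finset.sum_congr rfl fun j _ => h3 j, Finset.sum_const, Finset.card_univ,
      Fintype.card_fin, nsmul_eq_mul, mul_one]
  have hE : E = {ω | SF ω ≤ a} := by
    ext ω
    simp only [hEdef, Set.mem_setOf_eq, hcard ω]
    constructor <;> intro h <;> [skip; skip] <;> rw [hadef] at * <;> linarith
  have hEmeas : MeasurableSet E := by
    rw [hE]
    exact measurableSet_le hSFmeas measurable_const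
  have hcompl : μ Eᶜ ≤ ENNReal.ofReal δ := by
    have hsub : Eᶜ ⊆ {ω | a ≤ SF ω} := by
      intro ω hω
      rw [hE] at hω
      simp only [Set.mem_compl_iff, Set.mem_setOf_eq, not_le] at hω
      exact le_of_lt hω
    calc μ Eᶜ ≤ μ {ω | a ≤ SF ω} := measure_mono hsub
      _ ≤ ENNReal.ofReal δ :=
          (ENNReal.le_ofReal_iff_toReal_le (measure_ne_top _ _) hδ0.le).2 htail
  have h1δ : ENNReal.ofReal (1 - δ) = 1 - ENNReal.ofReal δ := by
    rw [← ENNReal.ofReal_one, ← ENNReal.ofReal_sub _ hδ0.le]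
  rw [h1δ]
  have hμE : μ E = 1 - μ Eᶜ := by
    rw [measure_compl hEmeas (measure_ne_top _ _), measure_univ]
    rw [ENNReal.sub_sub_cancel ENNReal.one_ne_top (prob_le_one)]
  rw [hμE]
  exact tsub_le_tsub_left hcompl 1
end

section
/- In the generative model with parameters N, K, γ with 0 ≤ γ ≤ 1/5, any classifier f : {0,1}^N → {0,1} that includes exactly k relevant variables (i.e., |V(f) ∩ R| = k, where R is the set of relevant variables) has error probability P(f(X) ≠ Y) at least (1/4)·exp(−5·γ²·k). -/
private lemma sum_flip_one {N : ℕ} (f : (Fin N → Bool) → Bool) (i : Fin N)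
    (hi : ∀ v, f v = f (Function.update v i (!(v i))))
    (Q : Fin N → Bool → Bool → ℝ) :
    ∑ x : Fin N → Bool, ∏ j, Q j (x j) (!(f x))
      = ∑ x : Fin N → Bool,
          ((Q i false (!(f x)) + Q i true (!(f x))) / 2)
            * ∏ j ∈ Finset.univ.erase i, Q j (x j) (!(f x)) := by
  classical
  set σ : (Fin N → Bool) → (Fin N → Bool) := fun x => Function.update x i (!(x i)) with hσ
  have hinv : Function.Involutive σ := by
    intro x
    funext j
    by_cases h : j = i
    · subst h; simp [σ]
    · simp [σ, Function.update_of_ne h]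
  have e1 : ∑ x : Fin N → Bool, ∏ j, Q j (x j) (!(f x))
      = ∑ x : Fin N → Bool, Q i (x i) (!(f x)) * ∏ j ∈ Finset.univ.erase i, Q j (x j) (!(f x)) :=
    Finset.sum_congr rfl fun x _ =>
      (Finset.mul_prod_erase Finset.univ _ (Finset.mem_univ i)).symm
  have key : ∑ x : Fin N → Bool,
        Q i (x i) (!(f x)) * ∏ j ∈ Finset.univ.erase i, Q j (x j) (!(f x))
      = ∑ x : Fin N → Bool,
        Q i (!(x i)) (!(f x)) * ∏ j ∈ Finset.univ.erase i, Q j (x j) (!(f x)) := by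
    refine ((Function.Bijective.sum_comp hinv.bijective
      (fun x => Q i (x i) (!(f x)) * ∏ j ∈ Finset.univ.erase i, Q j (x j) (!(f x)))).symm.trans ?_)
    refine Finset.sum_congr rfl fun x _ => ?_
    have hf : f (σ x) = f x := (hi x).symm
    rw [hf]
    congr 1
    · simp [σ]
    · exact Finset.prod_congr rfl fun j hj => by
        rw [show σ x j = x j from Function.update_of_ne (Finset.ne_of_mem_erase hj) _ _]
  have e2 : ∀ x : Fin N → Bool,
      ((Q i false (!(f x)) + Q i true (!(f x))) / 2)
          * ∏ j ∈ Finset.univ.erase i, Q j (x j) (!(f x))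
      = (Q i (x i) (!(f x)) * ∏ j ∈ Finset.univ.erase i, Q j (x j) (!(f x))
         + Q i (!(x i)) (!(f x)) * ∏ j ∈ Finset.univ.erase i, Q j (x j) (!(f x))) / 2 := by
    intro x
    cases h : x i <;> simp only [Bool.not_false, Bool.not_true] <;> ring
  rw [e1, Finset.sum_congr rfl fun x _ => e2 x, ← Finset.sum_div, Finset.sum_add_distrib, ← key]
  ring

private lemma sum_flips {N : ℕ} (f : (Fin N → Bool) → Bool) (T : Finset (Fin N))
    (hT : ∀ i ∈ T, ∀ v, f v = f (Function.update v i (!(v i))))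
    (Q : Fin N → Bool → Bool → ℝ) :
    ∑ x : Fin N → Bool, ∏ j, Q j (x j) (!(f x))
      = ∑ x : Fin N → Bool, ∏ j,
          (if j ∈ T then (Q j false (!(f x)) + Q j true (!(f x))) / 2
           else Q j (x j) (!(f x))) := by
  classical
  revert hT
  induction T using Finset.induction_on with
  | empty => intro _; simp
  | @insert i T hiT ih =>
    intro hT
    have hi : ∀ v, f v = f (Function.update v i (!(v i))) := hT i (Finset.mem_insert_self i T)
    refine (ih (fun j hj => hT j (Finset.mem_insert_of_mem hj))).trans ?_
    refine (sum_flip_one f i hi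
      (fun j b y => if j ∈ T then (Q j false y + Q j true y) / 2 else Q j b y)).trans ?_
    refine Finset.sum_congr rfl fun x _ => ?_
    rw [← Finset.mul_prod_erase Finset.univ _ (Finset.mem_univ i)]
    congr 1
    · simp [hiT]
    · refine Finset.prod_congr rfl fun j hj => ?_
      have hji : j ≠ i := Finset.ne_of_mem_erase hj
      simp [Finset.mem_insert, hji]

/-- **Lemma 8.** Generative model with parameters `N, K, γ` (`0 ≤ γ ≤ 1/5`): the label `Y` is
uniform on `{0,1}`, and conditioned on `Y` the `N` binary variables are independent, variable `i`
agreeing with `Y` with probability `p i`, which is `1/2 + γ` or `1/2 − γ` for the `K` relevant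
variables (the set `R`) and `1/2` for the others.  Hence the probability of an example
`e = (x, y)` is `(1/2)·∏ i, (if x i = y then p i else 1 − p i)`.  Any classifier
`f : {0,1}^N → {0,1}` that includes exactly `k` relevant variables (a variable is included if
flipping it can change `f`'s output) has error probability at least `(1/4)·exp(−5·γ²·k)`. -/
theorem classifier_error_lower_bound
    (N K k : ℕ) (γ : ℝ) (hγ0 : 0 ≤ γ) (hγ : γ ≤ 1 / 5)
    (R : Finset (Fin N)) (hR : R.card = K)
    (sign : Fin N → Bool)
    (p : Fin N → ℝ)
    (hp : ∀ i, p i = if i ∈ R then (if sign i then 1 / 2 + γ else 1 / 2 - γ) else 1 / 2)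
    (f : (Fin N → Bool) → Bool)
    (hk : (Finset.univ.filter (fun i : Fin N =>
        i ∈ R ∧ ∃ v : Fin N → Bool,
          f v ≠ f (Function.update v i (!(v i))))).card = k) :
    (1 / 4 : ℝ) * Real.exp (-5 * γ ^ 2 * k)
      ≤ ∑ e : (Fin N → Bool) × Bool,
          ((1 / 2 : ℝ) * ∏ i, (if e.1 i = e.2 then p i else 1 - p i)) *
            (if f e.1 ≠ e.2 then 1 else 0) := by
  classical
  -- basic bounds on p
  have hγ2 : γ ^ 2 ≤ 1 / 25 := by nlinarith
  have hp0 : ∀ j, 0 ≤ p j := by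
    intro j; rw [hp j]; split_ifs <;> linarith
  have hp1 : ∀ j, p j ≤ 1 := by
    intro j; rw [hp j]; split_ifs <;> linarith
  set S : Finset (Fin N) := Finset.univ.filter (fun i : Fin N =>
      i ∈ R ∧ ∃ v : Fin N → Bool, f v ≠ f (Function.update v i (!(v i)))) with hSdef
  have hSsub : S ⊆ R := fun i hi => ((Finset.mem_filter.mp hi).2).1
  -- the symmetrized coefficients
  set Q' : Fin N → Bool → Bool → ℝ :=
    fun j b y => if j ∈ S then (if b = y then p j else 1 - p j) else (1/2 : ℝ) with hQ'def
  have hQ'nonneg : ∀ j b y, 0 ≤ Q' j b y := by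
    intro j b y
    simp only [hQ'def]
    split_ifs <;> [skip; skip; norm_num] <;> [exact hp0 j; linarith [hp1 j]]
  -- Step A: the error sum equals (1/2) * ∑ₓ ∏ⱼ Q j (x j) (¬ f x)
  have stepA : ∑ e : (Fin N → Bool) × Bool,
        ((1 / 2 : ℝ) * ∏ i, (if e.1 i = e.2 then p i else 1 - p i)) *
          (if f e.1 ≠ e.2 then 1 else 0)
      = (1/2 : ℝ) * ∑ x : Fin N → Bool, ∏ j,
          (if x j = (!(f x)) then p j else 1 - p j) := by
    rw [Fintype.sum_prod_type, Finset.mul_sum]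
    refine Finset.sum_congr rfl fun x _ => ?_
    rw [Fintype.sum_bool]
    cases hfx : f x <;> simp [hfx]
  -- Step B: symmetrize over the relevant-but-not-included coordinates
  have hTinv : ∀ i ∈ R \ S, ∀ v, f v = f (Function.update v i (!(v i))) := by
    intro i hiT v
    rw [Finset.mem_sdiff] at hiT
    by_contra hne
    exact hiT.2 (Finset.mem_filter.mpr ⟨Finset.mem_univ i, hiT.1, v, hne⟩)
  have stepB := sum_flips f (R \ S) hTinv (fun j b y => if b = y then p j else 1 - p j)
  have stepB2 : ∑ x : Fin N → Bool, ∏ j,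
        (if j ∈ R \ S then
            ((if (false : Bool) = (!(f x)) then p j else 1 - p j)
              + (if (true : Bool) = (!(f x)) then p j else 1 - p j)) / 2
         else (if x j = (!(f x)) then p j else 1 - p j))
      = ∑ x : Fin N → Bool, ∏ j, Q' j (x j) (!(f x)) := by
    refine Finset.sum_congr rfl fun x _ => Finset.prod_congr rfl fun j _ => ?_
    by_cases hjT : j ∈ R \ S
    · have hjS : j ∉ S := (Finset.mem_sdiff.mp hjT).2
      simp only [hQ'def, if_pos hjT, if_neg hjS]
      cases f x <;> simp <;> ring
    · simp only [hQ'def, if_neg hjT]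
      by_cases hjS : j ∈ S
      · simp [hjS]
      · have hjR : j ∉ R := by
          intro hjR; exact hjT (Finset.mem_sdiff.mpr ⟨hjR, hjS⟩)
        have hpj : p j = 1/2 := by rw [hp j, if_neg hjR]
        rw [if_neg hjS, hpj]
        split <;> norm_num
  -- abbreviations
  set u : (Fin N → Bool) → ℝ := fun x => ∏ j, Q' j (x j) false with hu_def
  set v : (Fin N → Bool) → ℝ := fun x => ∏ j, Q' j (x j) true with hv_def
  set s : (Fin N → Bool) → ℝ :=
    fun x => ∏ j, Real.sqrt (Q' j (x j) false * Q' j (x j) true) with hs_def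
  have hu0 : ∀ x, 0 ≤ u x := fun x => Finset.prod_nonneg fun j _ => hQ'nonneg j (x j) false
  have hv0 : ∀ x, 0 ≤ v x := fun x => Finset.prod_nonneg fun j _ => hQ'nonneg j (x j) true
  have hs0 : ∀ x, 0 ≤ s x := fun x => Finset.prod_nonneg fun j _ => Real.sqrt_nonneg _
  have hs2 : ∀ x, s x ^ 2 = u x * v x := by
    intro x
    rw [hs_def, hu_def, hv_def, ← Finset.prod_pow, ← Finset.prod_mul_distrib]
    refine Finset.prod_congr rfl fun j _ => ?_
    exact Real.sq_sqrt (mul_nonneg (hQ'nonneg j (x j) false) (hQ'nonneg j (x j) true))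
  -- pointwise min bound
  have hmin : ∀ x, min (u x) (v x) ≤ ∏ j, Q' j (x j) (!(f x)) := by
    intro x
    cases hfx : f x
    · exact min_le_right (u x) (v x)
    · exact min_le_left (u x) (v x)
  -- the three product formulas
  have hsum_u : ∑ x : Fin N → Bool, u x = 1 := by
    rw [hu_def, show (∑ x : Fin N → Bool, ∏ j, Q' j (x j) false)
        = ∏ j, ∑ b : Bool, Q' j b false from
          (Fintype.prod_sum (fun j (b : Bool) => Q' j b false)).symm]
    refine Finset.prod_eq_one fun j _ => ?_
    rw [Fintype.sum_bool]
    simp only [hQ'def]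
    split_ifs
    all_goals try exact False.elim (by assumption)
    all_goals ring
  have hsum_v : ∑ x : Fin N → Bool, v x = 1 := by
    rw [hv_def, show (∑ x : Fin N → Bool, ∏ j, Q' j (x j) true)
        = ∏ j, ∑ b : Bool, Q' j b true from
          (Fintype.prod_sum (fun j (b : Bool) => Q' j b true)).symm]
    refine Finset.prod_eq_one fun j _ => ?_
    rw [Fintype.sum_bool]
    simp only [hQ'def]
    split_ifs
    all_goals try exact False.elim (by assumption)
    all_goals ring
  have hc0 : (0:ℝ) ≤ 1 - 4 * γ ^ 2 := by nlinarith
  have hsum_s : ∑ x : Fin N → Bool, s x = Real.sqrt (1 - 4 * γ ^ 2) ^ k := by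
    rw [hs_def, show (∑ x : Fin N → Bool, ∏ j, Real.sqrt (Q' j (x j) false * Q' j (x j) true))
        = ∏ j, ∑ b : Bool, Real.sqrt (Q' j b false * Q' j b true) from
          (Fintype.prod_sum (fun j (b : Bool) => Real.sqrt (Q' j b false * Q' j b true))).symm]
    have hterm : ∀ j, (∑ b : Bool, Real.sqrt (Q' j b false * Q' j b true))
        = if j ∈ S then Real.sqrt (1 - 4 * γ ^ 2) else 1 := by
      intro j
      rw [Fintype.sum_bool]
      by_cases hjS : j ∈ S
      · have hpj : p j * (1 - p j) = 1/4 - γ ^ 2 := by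
          rw [hp j, if_pos (hSsub hjS)]
          cases sign j <;> simp <;> ring
        simp only [hQ'def, if_pos hjS]
        norm_num
        rw [mul_comm (1 - p j) (p j), hpj]
        rw [show (1:ℝ) - 4 * γ ^ 2 = 4 * (1/4 - γ ^ 2) by ring,
          Real.sqrt_mul (by norm_num : (0:ℝ) ≤ 4),
          show Real.sqrt 4 = 2 by
            rw [show (4:ℝ) = 2 ^ 2 by norm_num, Real.sqrt_sq (by norm_num : (0:ℝ) ≤ 2)]]
        ring
      · simp only [hQ'def, if_neg hjS]
        rw [show (1/2 : ℝ) * (1/2) = (1/2)^2 by ring,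
          Real.sqrt_sq (by norm_num : (0:ℝ) ≤ 1/2)]
        norm_num
    rw [Finset.prod_congr rfl fun j _ => hterm j, Finset.prod_ite_mem,
      Finset.univ_inter, Finset.prod_const, hk]
  -- Cauchy–Schwarz
  have hCS := Finset.sum_mul_sq_le_sq_mul_sq Finset.univ
    (fun x : Fin N → Bool => Real.sqrt (min (u x) (v x)))
    (fun x : Fin N → Bool => Real.sqrt (max (u x) (v x)))
  have hprodsqrt : ∀ x : Fin N → Bool,
      Real.sqrt (min (u x) (v x)) * Real.sqrt (max (u x) (v x)) = s x := by
    intro x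
    rw [← Real.sqrt_mul (le_min (hu0 x) (hv0 x)), min_mul_max, ← hs2 x,
      Real.sqrt_sq (hs0 x)]
  have hsqmin : ∀ x : Fin N → Bool, Real.sqrt (min (u x) (v x)) ^ 2 = min (u x) (v x) :=
    fun x => Real.sq_sqrt (le_min (hu0 x) (hv0 x))
  have hsqmax : ∀ x : Fin N → Bool, Real.sqrt (max (u x) (v x)) ^ 2 = max (u x) (v x) :=
    fun x => Real.sq_sqrt (le_max_of_le_left (hu0 x))
  rw [Finset.sum_congr rfl fun x _ => hprodsqrt x, hsum_s,
    Finset.sum_congr rfl fun x _ => hsqmin x,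
    Finset.sum_congr rfl fun x _ => hsqmax x] at hCS
  have hsum_max : ∑ x : Fin N → Bool, max (u x) (v x) ≤ 2 := by
    have : ∀ x : Fin N → Bool, max (u x) (v x) ≤ u x + v x :=
      fun x => max_le (le_add_of_nonneg_right (hv0 x)) (le_add_of_nonneg_left (hu0 x))
    calc ∑ x : Fin N → Bool, max (u x) (v x) ≤ ∑ x : Fin N → Bool, (u x + v x) :=
          Finset.sum_le_sum fun x _ => this x
      _ = 2 := by rw [Finset.sum_add_distrib, hsum_u, hsum_v]; norm_num
  have hmin0 : 0 ≤ ∑ x : Fin N → Bool, min (u x) (v x) :=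
    Finset.sum_nonneg fun x _ => le_min (hu0 x) (hv0 x)
  have hCS2 : (1 - 4 * γ ^ 2) ^ k ≤ 2 * ∑ x : Fin N → Bool, min (u x) (v x) := by
    have h1 : (Real.sqrt (1 - 4 * γ ^ 2) ^ k) ^ 2 = (1 - 4 * γ ^ 2) ^ k := by
      rw [← pow_mul, mul_comm k 2, pow_mul, Real.sq_sqrt hc0]
    calc (1 - 4 * γ ^ 2) ^ k = (Real.sqrt (1 - 4 * γ ^ 2) ^ k) ^ 2 := h1.symm
      _ ≤ (∑ x : Fin N → Bool, min (u x) (v x)) * ∑ x : Fin N → Bool, max (u x) (v x) := hCS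
      _ ≤ (∑ x : Fin N → Bool, min (u x) (v x)) * 2 := by
          exact mul_le_mul_of_nonneg_left hsum_max hmin0
      _ = 2 * ∑ x : Fin N → Bool, min (u x) (v x) := by ring
  -- the exponential bound
  have hexp : Real.exp (-5 * γ ^ 2 * (k : ℝ)) ≤ (1 - 4 * γ ^ 2) ^ k := by
    have hE : Real.exp (-(5 * γ ^ 2)) ≤ 1 - 4 * γ ^ 2 := by
      have h1 : 5 * γ ^ 2 + 1 ≤ Real.exp (5 * γ ^ 2) := Real.add_one_le_exp _
      have hpos : (0:ℝ) < 1 + 5 * γ ^ 2 := by positivity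
      have h3 : (Real.exp (5 * γ ^ 2))⁻¹ ≤ (1 + 5 * γ ^ 2)⁻¹ :=
        inv_anti₀ hpos (by linarith)
      have h4 : (1 + 5 * γ ^ 2)⁻¹ ≤ 1 - 4 * γ ^ 2 := by
        rw [inv_eq_one_div, div_le_iff₀ hpos]
        nlinarith
      rw [Real.exp_neg]
      linarith
    calc Real.exp (-5 * γ ^ 2 * (k : ℝ)) = Real.exp ((k : ℝ) * (-(5 * γ ^ 2))) := by ring_nf
      _ = Real.exp (-(5 * γ ^ 2)) ^ k := Real.exp_nat_mul _ k
      _ ≤ (1 - 4 * γ ^ 2) ^ k := pow_le_pow_left₀ (Real.exp_pos _).le hE k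
  -- put everything together
  rw [stepA]
  have hfinal : ∑ x : Fin N → Bool, min (u x) (v x)
      ≤ ∑ x : Fin N → Bool, ∏ j, (if x j = (!(f x)) then p j else 1 - p j) := by
    rw [show (∑ x : Fin N → Bool, ∏ j, (if x j = (!(f x)) then p j else 1 - p j))
        = ∑ x : Fin N → Bool, ∏ j, Q' j (x j) (!(f x)) from stepB.trans stepB2]
    exact Finset.sum_le_sum fun x _ => hmin x
  calc (1 / 4 : ℝ) * Real.exp (-5 * γ ^ 2 * k)
      ≤ (1/4 : ℝ) * (1 - 4 * γ ^ 2) ^ k := by linarith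
    _ ≤ (1/4 : ℝ) * (2 * ∑ x : Fin N → Bool, min (u x) (v x)) := by linarith
    _ = (1/2 : ℝ) * ∑ x : Fin N → Bool, min (u x) (v x) := by ring
    _ ≤ (1/2 : ℝ) * ∑ x : Fin N → Bool, ∏ j, (if x j = (!(f x)) then p j else 1 - p j) := by
        linarith
end

section
/- Consider the generative model in which the set R of K relevant variables is chosen uniformly at random among the N variables, each relevant variable agrees with the class label with probability 1/2 + γ (0 < γ < 1/2), and each other variable agrees with the label with probability 1/2, all variables being conditionally independent given the label. For any two variables x_i and x_j and any realized training set S of m examples: P(x_i ∈ R | S) > P(x_j ∈ R | S) if and only if the empirical edge of x_i in S is greater than the empirical edge of x_j in S; and P(x_i ∈ R | S) = P(x_j ∈ R | S) if and only if their empirical edges in S are equal. -/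
lemma aux_pow_lt (p q : ℝ) (hq : 0 < q) (hpq : q < p) (m a b : ℕ) (hb : b ≤ m) (hab : a < b) :
    p ^ a * q ^ (m - a) < p ^ b * q ^ (m - b) := by
  have hp : 0 < p := lt_trans hq hpq
  have h1 : m - a = (b - a) + (m - b) := by omega
  have h2 : a + (b - a) = b := by omega
  calc p ^ a * q ^ (m - a) = (p ^ a * q ^ (m - b)) * q ^ (b - a) := by
        rw [h1, pow_add]; ring
    _ < (p ^ a * q ^ (m - b)) * p ^ (b - a) := by
        apply mul_lt_mul_of_pos_left _ (by positivity)
        exact pow_lt_pow_left₀ hpq hq.le (by omega)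
    _ = p ^ b * q ^ (m - b) := by
        rw [mul_right_comm, ← pow_add, h2]

/-- **Lemma 9 (monotonicity of relevance in empirical edge).** Generative model: the set `R` of
`K` relevant variables is uniformly random among the `K`-subsets of the `N` variables
(`0 < K < N`); each example has a uniform label and, conditionally on the label and `R`, the
variables are independent, a relevant variable agreeing with the label with probability
`1/2 + γ` (`0 < γ < 1/2`) and any other variable with probability `1/2`.  For a realized training
set `S` of `m` examples, `w r` is the joint probability of choosing `r` as the relevant set and
observing `S`; `condP i = P(xᵢ ∈ R | S)` is the corresponding conditional probability, and
`edge i` counts the examples on which variable `i` agrees with the label (which determines the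
empirical edge).  Then `P(xᵢ ∈ R | S) > P(xⱼ ∈ R | S)` iff the empirical edge of `xᵢ` exceeds
that of `xⱼ`, and the conditional probabilities are equal iff the empirical edges are equal. -/
theorem relevance_monotone_in_empirical_edge
    (N K m : ℕ) (hK0 : 0 < K) (hKN : K < N)
    (γ : ℝ) (hγ0 : 0 < γ) (hγ : γ < 1 / 2)
    (S : Fin m → (Fin N → Bool) × Bool)
    (w : Finset (Fin N) → ℝ)
    (hw : ∀ r, w r = (if r.card = K then (1 : ℝ) / (N.choose K) else 0) *
        ∏ t, ((1 / 2 : ℝ) * ∏ i, (if (S t).1 i = (S t).2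
            then (if i ∈ r then 1 / 2 + γ else 1 / 2)
            else (if i ∈ r then 1 / 2 - γ else 1 / 2))))
    (condP : Fin N → ℝ)
    (hcond : ∀ i, condP i =
      (∑ r : Finset (Fin N), if i ∈ r then w r else 0) / (∑ r : Finset (Fin N), w r))
    (edge : Fin N → ℕ)
    (hedge : ∀ i, edge i = (Finset.univ.filter (fun t : Fin m => (S t).1 i = (S t).2)).card)
    (i j : Fin N) :
    (condP j < condP i ↔ edge j < edge i) ∧ (condP i = condP j ↔ edge i = edge j) := by
  have hp : (0 : ℝ) < 1 / 2 + γ := by linarith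
  have hq : (0 : ℝ) < 1 / 2 - γ := by linarith
  have hqp : (1 / 2 - γ : ℝ) < 1 / 2 + γ := by linarith
  -- edges are at most m
  have hedgele : ∀ x, edge x ≤ m := by
    intro x
    rw [hedge]
    simpa using Finset.card_filter_le Finset.univ (fun t : Fin m => (S t).1 x = (S t).2)
  -- counting products of ite
  have prod_ite_count : ∀ (x : Fin N) (A B : ℝ),
      (∏ t : Fin m, (if (S t).1 x = (S t).2 then A else B)) = A ^ (edge x) * B ^ (m - edge x) := by
    intro x A B
    rw [Finset.prod_ite, Finset.prod_const, Finset.prod_const]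
    have hcards := Finset.card_filter_add_card_filter_not
      (s := (Finset.univ : Finset (Fin m))) (fun t => (S t).1 x = (S t).2)
    simp only [Finset.card_univ, Fintype.card_fin] at hcards
    rw [hedge x]
    congr 2
    omega
  -- the relevant "weight" of a variable
  set gT : Fin N → ℝ := fun x => (1 / 2 + γ) ^ (edge x) * (1 / 2 - γ) ^ (m - edge x) with hgT
  have hgTpos : ∀ x, 0 < gT x := by intro x; rw [hgT]; positivity
  set z : ℝ := (1 / 2 : ℝ) ^ m with hz
  have hzpos : 0 < z := by rw [hz]; positivity
  set c : Finset (Fin N) → ℝ := fun r => if r.card = K then (1 : ℝ) / (N.choose K) else 0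
    with hc
  -- rewrite w in product form
  have hW : ∀ r, w r = c r * (z * ∏ x, (if x ∈ r then gT x else z)) := by
    intro r
    rw [hw r, hc]
    congr 1
    have hrearr : (∏ t : Fin m, ((1 / 2 : ℝ) * ∏ x, (if (S t).1 x = (S t).2
        then (if x ∈ r then 1 / 2 + γ else 1 / 2)
        else (if x ∈ r then 1 / 2 - γ else 1 / 2))))
        = (1 / 2 : ℝ) ^ m * ∏ x : Fin N, ∏ t : Fin m, (if (S t).1 x = (S t).2
        then (if x ∈ r then 1 / 2 + γ else 1 / 2)
        else (if x ∈ r then 1 / 2 - γ else 1 / 2)) := by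
      rw [Finset.prod_mul_distrib, Finset.prod_const, Finset.card_univ, Fintype.card_fin,
        Finset.prod_comm]
    rw [hrearr, hz]
    congr 1
    apply Finset.prod_congr rfl
    intro x _
    by_cases hx : x ∈ r
    · simp only [hx, if_true]
      rw [prod_ite_count x (1 / 2 + γ) (1 / 2 - γ)]
    · simp only [hx, if_false]
      rw [prod_ite_count x (1 / 2) (1 / 2), ← pow_add]
      congr 1
      have hxm := hedgele x
      omega
  have hWnonneg : ∀ r, 0 ≤ w r := by
    intro r
    rw [hW r]
    have h1 : 0 ≤ c r := by
      rw [hc]; dsimp only; split_ifs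
      · positivity
      · exact le_refl 0
    apply mul_nonneg h1
    apply mul_nonneg hzpos.le
    apply Finset.prod_nonneg
    intro x _
    split_ifs
    · exact (hgTpos x).le
    · exact hzpos.le
  have hWpos : ∀ r, r.card = K → 0 < w r := by
    intro r hr
    rw [hW r, hc]
    dsimp only
    rw [if_pos hr]
    have hchoose : (0 : ℝ) < N.choose K := by
      exact_mod_cast Nat.choose_pos (le_of_lt hKN)
    have h1 : (0 : ℝ) < 1 / (N.choose K) := by positivity
    apply mul_pos h1
    apply mul_pos hzpos
    apply Finset.prod_pos
    intro x _
    split_ifs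
    · exact hgTpos x
    · exact hzpos
  -- the denominator is positive
  set D : ℝ := ∑ r : Finset (Fin N), w r with hD
  have hDpos : 0 < D := by
    rw [hD]
    apply Finset.sum_pos' (fun r _ => hWnonneg r)
    obtain ⟨s, -, hs⟩ := Finset.exists_subset_card_eq
      (s := (Finset.univ : Finset (Fin N))) (n := K)
      (by simp only [Finset.card_univ, Fintype.card_fin]; omega)
    exact ⟨s, Finset.mem_univ s, hWpos s hs⟩
  -- numerators
  set Num : Fin N → ℝ := fun x => ∑ r ∈ Finset.univ.filter (fun r : Finset (Fin N) => x ∈ r), w r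
    with hNum
  have hNumx : ∀ x, Num x = ∑ r : Finset (Fin N), if x ∈ r then w r else 0 := by
    intro x
    rw [hNum]
    exact Finset.sum_filter _ _
  have hcond' : ∀ x, condP x = Num x / D := by
    intro x
    rw [hcond x, ← hNumx x]
  -- reduce comparisons of condP to comparisons of Num
  have hlt_iff : condP j < condP i ↔ Num j < Num i := by
    rw [hcond' i, hcond' j]
    exact div_lt_div_iff_of_pos_right hDpos
  have heq_iff : condP i = condP j ↔ Num i = Num j := by
    rw [hcond' i, hcond' j]
    constructor
    · intro h
      have h2 := congrArg (· * D) h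
      simpa [div_mul_cancel₀, hDpos.ne'] using h2
    · intro h; rw [h]
  -- trivial case i = j
  by_cases hij : i = j
  · subst hij
    exact ⟨by simp, by simp⟩
  -- split numerators
  have split_num : ∀ x y : Fin N,
      Num x = (∑ r ∈ Finset.univ.filter (fun r : Finset (Fin N) => x ∈ r ∧ y ∈ r), w r)
        + ∑ r ∈ Finset.univ.filter (fun r : Finset (Fin N) => x ∈ r ∧ y ∉ r), w r := by
    intro x y
    simp only [hNum]
    rw [← Finset.sum_filter_add_sum_filter_not
      (Finset.univ.filter (fun r : Finset (Fin N) => x ∈ r)) (fun r => y ∈ r) w]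
    congr 1 <;> · congr 1; rw [Finset.filter_filter]
  set SA : ℝ := ∑ r ∈ Finset.univ.filter (fun r : Finset (Fin N) => i ∈ r ∧ j ∉ r), w r with hSA
  set SB : ℝ := ∑ r ∈ Finset.univ.filter (fun r : Finset (Fin N) => j ∈ r ∧ i ∉ r), w r with hSB
  have hNi : Num i = (∑ r ∈ Finset.univ.filter (fun r : Finset (Fin N) => i ∈ r ∧ j ∈ r), w r)
      + SA := split_num i j
  have hNj : Num j = (∑ r ∈ Finset.univ.filter (fun r : Finset (Fin N) => i ∈ r ∧ j ∈ r), w r)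
      + SB := by
    rw [split_num j i, hSB]
    congr 2
    ext r
    simp [and_comm]
  -- SA is positive
  have hSApos : 0 < SA := by
    rw [hSA]
    apply Finset.sum_pos' (fun r _ => hWnonneg r)
    have hcard2 : K - 1 ≤ ((Finset.univ.erase i).erase j).card := by
      have h1 : ((Finset.univ.erase i).erase j).card = N - 2 := by
        rw [Finset.card_erase_of_mem, Finset.card_erase_of_mem]
        · simp only [Finset.card_univ, Fintype.card_fin]
          omega
        · exact Finset.mem_univ i
        · simp [Finset.mem_erase, Ne.symm hij]
      omega
    obtain ⟨s, hs_sub, hs_card⟩ := Finset.exists_subset_card_eq hcard2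
    have hi_s : i ∉ s := fun h => by
      have h2 := hs_sub h
      simp [Finset.mem_erase] at h2
    have hj_s : j ∉ s := fun h => by
      have h2 := hs_sub h
      simp [Finset.mem_erase] at h2
    refine ⟨insert i s, ?_, ?_⟩
    · simp only [Finset.mem_filter, Finset.mem_univ, true_and]
      refine ⟨Finset.mem_insert_self i s, ?_⟩
      simp only [Finset.mem_insert]
      push_neg
      exact ⟨Ne.symm hij, hj_s⟩
    · apply hWpos
      rw [Finset.card_insert_of_notMem hi_s, hs_card]
      omega
  -- the key bijection identity
  have key : gT i * SB = gT j * SA := by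
    rw [hSA, hSB, Finset.mul_sum, Finset.mul_sum]
    apply Finset.sum_nbij' (fun r => insert i (r.erase j)) (fun r => insert j (r.erase i))
    · intro r hr
      simp only [Finset.mem_filter, Finset.mem_univ, true_and] at hr ⊢
      refine ⟨Finset.mem_insert_self i _, ?_⟩
      simp only [Finset.mem_insert, Finset.mem_erase]
      push_neg
      exact ⟨Ne.symm hij, fun h _ => h rfl⟩
    · intro r hr
      simp only [Finset.mem_filter, Finset.mem_univ, true_and] at hr ⊢
      refine ⟨Finset.mem_insert_self j _, ?_⟩
      simp only [Finset.mem_insert, Finset.mem_erase]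
      push_neg
      exact ⟨hij, fun h _ => h rfl⟩
    · intro r hr
      simp only [Finset.mem_filter, Finset.mem_univ, true_and] at hr
      ext x
      simp only [Finset.mem_insert, Finset.mem_erase]
      constructor
      · rintro (rfl | ⟨hxi, rfl | ⟨hxj, hxr⟩⟩)
        · exact hr.1
        · exact absurd rfl hxi
        · exact hxr
      · intro hx
        by_cases hxj : x = j
        · exact Or.inl hxj
        · right
          refine ⟨fun hxi => ?_, Or.inr ⟨hxj, hx⟩⟩
          exact hr.2 (hxi ▸ hx)
    · intro r hr
      simp only [Finset.mem_filter, Finset.mem_univ, true_and] at hr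
      ext x
      simp only [Finset.mem_insert, Finset.mem_erase]
      constructor
      · rintro (rfl | ⟨hxj, rfl | ⟨hxi, hxr⟩⟩)
        · exact hr.1
        · exact absurd rfl hxj
        · exact hxr
      · intro hx
        by_cases hxi : x = i
        · exact Or.inl hxi
        · right
          refine ⟨fun hxj => ?_, Or.inr ⟨hxi, hx⟩⟩
          exact hr.2 (hxj ▸ hx)
    · intro r hr
      simp only [Finset.mem_filter, Finset.mem_univ, true_and] at hr
      obtain ⟨hjr, hir⟩ := hr
      set r' : Finset (Fin N) := insert i (r.erase j) with hr'
      have hir' : i ∈ r' := Finset.mem_insert_self i _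
      have hjr' : j ∉ r' := by
        rw [hr']
        simp only [Finset.mem_insert, Finset.mem_erase]
        push_neg
        exact ⟨Ne.symm hij, fun h _ => h rfl⟩
      have hcard : r'.card = r.card := by
        rw [hr', Finset.card_insert_of_notMem (by
          simp only [Finset.mem_erase]
          push_neg
          exact fun _ => hir), Finset.card_erase_of_mem hjr]
        have hpos : 0 < r.card := Finset.card_pos.mpr ⟨j, hjr⟩
        omega
      have hmem : ∀ x ∈ (Finset.univ.erase i).erase j, (x ∈ r' ↔ x ∈ r) := by
        intro x hx
        simp only [Finset.mem_erase] at hx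
        rw [hr']
        simp only [Finset.mem_insert, Finset.mem_erase]
        constructor
        · rintro (rfl | ⟨-, h⟩)
          · exact absurd rfl hx.2.1
          · exact h
        · intro h
          exact Or.inr ⟨hx.1, h⟩
      have hji : j ∈ (Finset.univ.erase i) :=
        Finset.mem_erase.mpr ⟨Ne.symm hij, Finset.mem_univ j⟩
      have hsplit : ∀ (u : Finset (Fin N)), (∏ x, (if x ∈ u then gT x else z))
          = (if i ∈ u then gT i else z) * ((if j ∈ u then gT j else z)
            * ∏ x ∈ (Finset.univ.erase i).erase j, (if x ∈ u then gT x else z)) := by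
        intro u
        rw [← Finset.mul_prod_erase Finset.univ
            (fun x => if x ∈ u then gT x else z) (Finset.mem_univ i),
          ← Finset.mul_prod_erase (Finset.univ.erase i)
            (fun x => if x ∈ u then gT x else z) hji]
      have hprod_eq : (∏ x ∈ (Finset.univ.erase i).erase j, (if x ∈ r then gT x else z))
          = ∏ x ∈ (Finset.univ.erase i).erase j, (if x ∈ r' then gT x else z) := by
        apply Finset.prod_congr rfl
        intro x hx
        rw [if_congr (hmem x hx) rfl rfl]
      rw [hW r, hW r', hsplit r, hsplit r', if_pos hir', if_neg hjr', if_pos hjr, if_neg hir,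
        hprod_eq, hc]
      dsimp only
      rw [hcard]
      ring
  -- reduce SA/SB comparisons to gT comparisons
  have hlt_AB : SB < SA ↔ gT j < gT i := by
    constructor
    · intro h
      have h2 : gT i * SB < gT i * SA := mul_lt_mul_of_pos_left h (hgTpos i)
      rw [key] at h2
      exact lt_of_mul_lt_mul_right (by linarith) hSApos.le
    · intro h
      have h2 : gT j * SA < gT i * SA := mul_lt_mul_of_pos_right h hSApos
      rw [← key] at h2
      exact lt_of_mul_lt_mul_left h2 (hgTpos i).le
  have heq_AB : SA = SB ↔ gT i = gT j := by
    constructor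
    · intro h
      have h2 := key
      rw [← h] at h2
      exact (mul_right_cancel₀ hSApos.ne' h2)
    · intro h
      have h2 := key
      rw [h] at h2
      exact (mul_left_cancel₀ (hgTpos j).ne' h2).symm
  -- reduce gT comparisons to edge comparisons
  have mono : ∀ a b : Fin N, edge a < edge b → gT a < gT b := by
    intro a b h
    rw [hgT]
    exact aux_pow_lt _ _ hq hqp m _ _ (hedgele b) h
  have gT_lt_iff : ∀ a b : Fin N, gT a < gT b ↔ edge a < edge b := by
    intro a b
    constructor
    · intro h
      rcases lt_trichotomy (edge a) (edge b) with h' | h' | h'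
      · exact h'
      · exfalso
        have : gT a = gT b := by rw [hgT]; dsimp only; rw [h']
        linarith
      · exact absurd (mono b a h') (by linarith)
    · exact mono a b
  have gT_eq_iff : ∀ a b : Fin N, gT a = gT b ↔ edge a = edge b := by
    intro a b
    constructor
    · intro h
      rcases lt_trichotomy (edge a) (edge b) with h' | h' | h'
      · exact absurd (mono a b h') (by linarith)
      · exact h'
      · exact absurd (mono b a h') (by linarith)
    · intro h
      rw [hgT]; dsimp only; rw [h]
  constructor
  · rw [hlt_iff, hNi, hNj, add_lt_add_iff_left, hlt_AB, gT_lt_iff]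
  · rw [heq_iff, hNi, hNj, add_right_inj, heq_AB, gT_eq_iff]
end
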